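/- arXiv:0710.2109 — 7 statements merged into one kernel-verified Lean document; each statement's English description precedes it below -/
import Mathlib

section
/- Let n ≥ 2 and let S be an intersecting family of permutations in the symmetric group S(n), i.e. for any π, σ ∈ S there exists i ∈ {1,…,n} with π(i) = σ(i). Then |S| ≤ (n−1)!. -/
open Fin.CommRing in
/-- **Deza–Frankl bound.** If `S` is an intersecting family of permutations of an
`n`-set (`n ≥ 2`), i.e. any two members of `S` agree in some point, then
`|S| ≤ (n-1)!`. -/
theorem intersecting_family_card_le (n : ℕ) (hn : 2 ≤ n)
    (S : Finset (Equiv.Perm (Fin n)))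
    (hS : ∀ π ∈ S, ∀ σ ∈ S, ∃ i : Fin n, π i = σ i) :
    S.card ≤ (n - 1).factorial := by
  obtain ⟨m, rfl⟩ : ∃ m, n = m + 1 := ⟨n - 1, by omega⟩
  simp only [Nat.add_sub_cancel]
  let N := m + 1
  have hN : N = m + 1 := rfl
  let c : Equiv.Perm (Fin N) := finRotate N
  have hcpow : ∀ (k : ℕ) (i : Fin N), (c ^ k) i = i + (k : Fin N) := by
    intro k
    induction k with
    | zero => simp
    | succ k ih =>
      intro i
      rw [pow_succ]
      simp only [Equiv.Perm.mul_apply]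
      have hci : c i = i + 1 := finRotate_succ_apply i
      rw [hci, ih]
      push_cast
      ring
  have hcN : c ^ N = 1 := by
    ext i
    simp [hcpow, Fin.natCast_self]
  have hfix : ∀ (k : ℕ) (i : Fin N), (c ^ k) i = i → c ^ k = 1 := by
    intro k i hik
    have h0 : (k : Fin N) = 0 := by
      have := hcpow k i
      rw [hik] at this
      exact (add_eq_left.mp this.symm)
    ext j
    simp [hcpow, h0]
  let f : Equiv.Perm (Fin N) → Equiv.Perm (Fin N) :=
    fun π => π * c ^ ((π⁻¹ 0 : Fin N)).val
  have hf0 : ∀ π, f π 0 = 0 := by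
    intro π
    simp only [f, Equiv.Perm.mul_apply, hcpow, zero_add, Fin.cast_val_eq_self]
    exact π.apply_symm_apply 0
  have hinj : Set.InjOn f S := by
    intro π hπ σ hσ hfe
    set a := ((π⁻¹ 0 : Fin N)).val with ha
    set b := ((σ⁻¹ 0 : Fin N)).val with hb
    have haN : a ≤ N := le_of_lt (Fin.is_lt _)
    have hinv : c ^ b * (c ^ a)⁻¹ = c ^ (b + (N - a)) := by
      rw [pow_add]
      congr 1
      have : c ^ a * c ^ (N - a) = 1 := by
        rw [← pow_add, Nat.add_sub_cancel' haN, hcN]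
      exact inv_eq_of_mul_eq_one_right this
    have hπσ : π = σ * c ^ (b + (N - a)) := by
      have : π * c ^ a = σ * c ^ b := hfe
      calc π = (π * c ^ a) * (c ^ a)⁻¹ := by group
        _ = (σ * c ^ b) * (c ^ a)⁻¹ := by rw [this]
        _ = σ * (c ^ b * (c ^ a)⁻¹) := by group
        _ = σ * c ^ (b + (N - a)) := by rw [hinv]
    obtain ⟨i, hi⟩ := hS π hπ σ hσ
    have : (c ^ (b + (N - a))) i = i := by
      have h1 : σ ((c ^ (b + (N - a))) i) = σ i := by
        rw [← Equiv.Perm.mul_apply, ← hπσ, hi]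
      exact σ.injective h1
    have h1 : c ^ (b + (N - a)) = 1 := hfix _ i this
    rw [hπσ, h1, mul_one]
  have hcard : S.card = (S.image f).card := (Finset.card_image_of_injOn hinj).symm
  rw [hcard]
  have hsub : S.image f ⊆ Finset.univ.filter (fun τ : Equiv.Perm (Fin N) => τ 0 = 0) := by
    intro τ hτ
    obtain ⟨π, _, rfl⟩ := Finset.mem_image.mp hτ
    simp [hf0]
  refine le_trans (Finset.card_le_card hsub) ?_
  have hstab : (Finset.univ.filter (fun τ : Equiv.Perm (Fin N) => τ 0 = 0)).card
      ≤ (Finset.univ : Finset (Equiv.Perm (Fin m))).card := by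
    apply Finset.card_le_card_of_injOn (fun τ => (Equiv.Perm.decomposeFin τ).2)
    · intro τ _; exact Finset.mem_univ _
    · intro τ₁ h₁ τ₂ h₂ he
      have k1 : ∀ τ : Equiv.Perm (Fin N), (Equiv.Perm.decomposeFin τ).1 = τ 0 := by
        intro τ
        conv_rhs => rw [← Equiv.Perm.decomposeFin.symm_apply_apply τ]
        rw [show Equiv.Perm.decomposeFin τ =
          ((Equiv.Perm.decomposeFin τ).1, (Equiv.Perm.decomposeFin τ).2) from rfl]
        rw [Equiv.Perm.decomposeFin_symm_apply_zero]
      have h1' : (Equiv.Perm.decomposeFin τ₁).1 = 0 := by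
        rw [k1]; exact (Finset.mem_filter.mp h₁).2
      have h2' : (Equiv.Perm.decomposeFin τ₂).1 = 0 := by
        rw [k1]; exact (Finset.mem_filter.mp h₂).2
      have : Equiv.Perm.decomposeFin τ₁ = Equiv.Perm.decomposeFin τ₂ :=
        Prod.ext (h1'.trans h2'.symm) he
      exact Equiv.Perm.decomposeFin.injective this
  refine le_trans hstab ?_
  rw [Finset.card_univ, Fintype.card_perm, Fintype.card_fin]
end

section
/- For every n ≥ 1, the independence number of the permutation graph P(n) equals (n−1)!: every independent set in P(n) has at most (n−1)! vertices, and the sets S_{i,j} = {π ∈ S(n) : π(i) = j} are independent sets of size (n−1)!. -/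
/-- The permutation graph `P(n)`: vertices are the permutations of `{1,…,n}`, and
distinct `π, σ` are adjacent iff `π i ≠ σ i` for every `i`. -/
def permutationGraph (n : ℕ) : SimpleGraph (Equiv.Perm (Fin n)) where
  Adj π σ := π ≠ σ ∧ ∀ i : Fin n, π i ≠ σ i
  symm := ⟨fun π σ h => ⟨h.1.symm, fun i => (h.2 i).symm⟩⟩
  loopless := ⟨fun π h => h.1 rfl⟩

lemma permGraph_card_filter (n : ℕ) (hn : 1 ≤ n) (i j : Fin n) :
    (Finset.univ.filter (fun π : Equiv.Perm (Fin n) => π i = j)).card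
      = (n - 1).factorial := by
  set c : Fin n → ℕ :=
    fun j => (Finset.univ.filter (fun π : Equiv.Perm (Fin n) => π i = j)).card with hc
  have hconst : ∀ j j' : Fin n, c j = c j' := by
    intro j j'
    apply Finset.card_bij (fun π _ => Equiv.swap j j' * π)
    · intro π hπ
      simp only [Finset.mem_filter, Finset.mem_univ, true_and] at hπ ⊢
      rw [Equiv.Perm.mul_apply, hπ, Equiv.swap_apply_left]
    · intro a _ b _ hab
      exact mul_left_cancel hab
    · intro σ hσ
      simp only [Finset.mem_filter, Finset.mem_univ, true_and] at hσ
      refine ⟨Equiv.swap j j' * σ, ?_, ?_⟩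
      · simp only [Finset.mem_filter, Finset.mem_univ, true_and]
        rw [Equiv.Perm.mul_apply, hσ, Equiv.swap_apply_right]
      · rw [← mul_assoc, Equiv.swap_mul_self, one_mul]
  have hsum : ∑ k : Fin n, c k = n.factorial := by
    have hcard : Fintype.card (Equiv.Perm (Fin n)) = n.factorial := by
      simp [Fintype.card_perm]
    rw [← hcard, ← Finset.card_univ]
    exact (Finset.card_eq_sum_card_fiberwise
      (f := fun π : Equiv.Perm (Fin n) => π i) (fun x _ => Finset.mem_univ _)).symm
  have hsum' : ∑ k : Fin n, c k = n * c j := by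
    rw [Finset.sum_congr rfl (fun k _ => hconst k j)]
    simp [Finset.card_univ, mul_comm]
  have hfac : n * (n - 1).factorial = n.factorial := Nat.mul_factorial_pred (by omega)
  have : n * c j = n * (n - 1).factorial := by omega
  exact Nat.eq_of_mul_eq_mul_left (by omega) this

/-- The independence number of the permutation graph `P(n)` is `(n-1)!` (`n ≥ 1`):
every independent set has at most `(n-1)!` vertices, and each of the sets
`S_{i,j} = {π : π i = j}` is an independent set of size `(n-1)!`. -/
theorem independenceNumber_permutationGraph (n : ℕ) (hn : 1 ≤ n) :
    (∀ S : Finset (Equiv.Perm (Fin n)),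
      (∀ π ∈ S, ∀ σ ∈ S, ¬ (permutationGraph n).Adj π σ) →
        S.card ≤ (n - 1).factorial) ∧
    (∀ i j : Fin n,
      (∀ π ∈ Finset.univ.filter (fun π : Equiv.Perm (Fin n) => π i = j),
        ∀ σ ∈ Finset.univ.filter (fun π : Equiv.Perm (Fin n) => π i = j),
          ¬ (permutationGraph n).Adj π σ) ∧
      (Finset.univ.filter (fun π : Equiv.Perm (Fin n) => π i = j)).card
        = (n - 1).factorial) := by
  haveI : NeZero n := ⟨Nat.one_le_iff_ne_zero.mp hn⟩
  constructor
  · intro S hInd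
    set i₀ : Fin n := ⟨0, hn⟩ with hi₀
    set φ : Equiv.Perm (Fin n) → Equiv.Perm (Fin n) :=
      fun π => π.trans (Equiv.addLeft (-(π i₀))) with hφ
    have hmaps : ∀ π ∈ S, φ π ∈
        Finset.univ.filter (fun π : Equiv.Perm (Fin n) => π i₀ = i₀) := by
      intro π _
      simp only [Finset.mem_filter, Finset.mem_univ, true_and, hφ,
        Equiv.trans_apply, Equiv.coe_addLeft, neg_add_cancel]
      exact Fin.ext (by simp [hi₀])
    have hinj : Set.InjOn φ S := by
      intro π hπ σ hσ h
      have key : ∀ x, -(π i₀) + π x = -(σ i₀) + σ x := by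
        intro x
        have := congrArg (fun e : Equiv.Perm (Fin n) => e x) h
        simpa [hφ, Equiv.trans_apply] using this
      by_cases hi : π i₀ = σ i₀
      · apply Equiv.ext
        intro x
        have := key x
        rw [hi] at this
        exact add_left_cancel this
      · exfalso
        apply hInd π hπ σ hσ
        refine ⟨fun hps => hi (by rw [hps]), fun x hx => ?_⟩
        have := key x
        rw [hx] at this
        exact hi (neg_injective (add_right_cancel this))
    calc S.card ≤ (Finset.univ.filter
          (fun π : Equiv.Perm (Fin n) => π i₀ = i₀)).card :=
        Finset.card_le_card_of_injOn φ hmaps hinj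
      _ = (n - 1).factorial := permGraph_card_filter n hn i₀ i₀
  · intro i j
    refine ⟨?_, permGraph_card_filter n hn i j⟩
    intro π hπ σ hσ hadj
    simp only [Finset.mem_filter, Finset.mem_univ, true_and] at hπ hσ
    exact hadj.2 i (by rw [hπ, hσ])
end

section
/- For every n ≥ 2, both d(n) and −d(n)/(n−1) = −(d(n−1) + d(n−2)) are eigenvalues of the (real) adjacency matrix of the permutation graph P(n). -/
instance (n : ℕ) : DecidableRel (permutationGraph n).Adj :=
  fun π σ => inferInstanceAs (Decidable (π ≠ σ ∧ ∀ i : Fin n, π i ≠ σ i))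

/-- The real adjacency matrix of the permutation graph `P(n)`. -/
def permutationGraphAdjMatrix (n : ℕ) :
    Matrix (Equiv.Perm (Fin n)) (Equiv.Perm (Fin n)) ℝ :=
  fun π σ => if (permutationGraph n).Adj π σ then 1 else 0

open Finset Equiv

variable {m : ℕ}

private lemma pg_adj_iff (π σ : Equiv.Perm (Fin (m + 2))) :
    (permutationGraph (m + 2)).Adj π σ ↔ ∀ i, π i ≠ σ i := by
  constructor
  · exact fun h => h.2
  · intro h
    refine ⟨fun he => h 0 (by rw [he]), h⟩

private lemma pg_deg (π : Equiv.Perm (Fin (m + 2))) :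
    (univ.filter fun σ => (permutationGraph (m + 2)).Adj π σ).card
      = numDerangements (m + 2) := by
  classical
  have h1 : (univ.filter fun σ => (permutationGraph (m + 2)).Adj π σ).card
      = (univ.filter fun τ : Equiv.Perm (Fin (m + 2)) => ∀ i, τ i ≠ i).card := by
    refine Finset.card_equiv (Equiv.mulRight π⁻¹) fun σ => ?_
    simp only [mem_filter, mem_univ, true_and, pg_adj_iff, Equiv.coe_mulRight,
      Equiv.Perm.mul_apply]
    constructor
    · intro h i
      intro he
      exact h (π⁻¹ i) (by simpa using he.symm)
    · intro h i hi
      have := h (π i)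
      simp only [Equiv.Perm.inv_def, Equiv.symm_apply_apply] at this
      exact this hi.symm
  rw [h1]
  have h2 := card_derangements_eq_numDerangements (Fin (m + 2))
  simp only [Fintype.card_fin] at h2
  rw [← h2]
  rw [Fintype.card_subtype]
  exact Finset.card_bij (fun a _ => a) (fun a ha => Finset.mem_filter.mpr ⟨mem_univ _, (Finset.mem_filter.mp ha).2⟩) (by simp) (fun b hb => ⟨b, Finset.mem_filter.mpr ⟨mem_univ _, (Finset.mem_filter.mp hb).2⟩, rfl⟩)

private lemma pg_N_zero (π : Equiv.Perm (Fin (m + 2))) (b : Fin (m + 2)) (h : π 0 = b) :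
    (univ.filter fun σ => (permutationGraph (m + 2)).Adj π σ ∧ σ 0 = b).card = 0 := by
  rw [Finset.card_eq_zero, Finset.filter_eq_empty_iff]
  rintro σ - ⟨ha, hb⟩
  exact ha.2 0 (by rw [h, hb])

private lemma pg_N_const (π π' : Equiv.Perm (Fin (m + 2))) (b b' : Fin (m + 2))
    (h : π 0 ≠ b) (h' : π' 0 ≠ b') :
    (univ.filter fun σ => (permutationGraph (m + 2)).Adj π σ ∧ σ 0 = b).card
      = (univ.filter fun σ => (permutationGraph (m + 2)).Adj π' σ ∧ σ 0 = b').card := by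
  classical
  set j := π⁻¹ b with hjd
  set j' := π'⁻¹ b' with hj'd
  have hj : j ≠ 0 := fun he => h (by rw [← he]; simp [hjd])
  have hj' : j' ≠ 0 := fun he => h' (by rw [← he]; simp [hj'd])
  set ρ := Equiv.swap j j' with hρd
  set τ := π' * ρ⁻¹ * π⁻¹ with hτd
  have hρ0 : ρ 0 = 0 := Equiv.swap_apply_of_ne_of_ne (Ne.symm hj) (Ne.symm hj')
  have hτπ : ∀ i, τ (π (ρ i)) = π' i := by
    intro i; simp [hτd, Equiv.Perm.mul_apply]
  have hτb : τ b = b' := by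
    simp [hτd, Equiv.Perm.mul_apply, ← hjd, hρd, Equiv.swap_inv, Equiv.swap_apply_left, hj'd]
  refine Finset.card_equiv ((Equiv.mulRight ρ).trans (Equiv.mulLeft τ)) fun σ => ?_
  simp only [mem_filter, mem_univ, true_and, pg_adj_iff, Equiv.trans_apply,
    Equiv.coe_mulRight, Equiv.coe_mulLeft, Equiv.Perm.mul_apply]
  constructor
  · rintro ⟨ha, hb⟩
    refine ⟨fun i => ?_, ?_⟩
    · rw [← hτπ i]
      exact fun he => ha (ρ i) (τ.injective he)
    · rw [hρ0, hb, hτb]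
  · rintro ⟨ha, hb⟩
    refine ⟨fun i => ?_, ?_⟩
    · have h2 := ha (ρ⁻¹ i)
      rw [← hτπ (ρ⁻¹ i)] at h2
      simp only [Equiv.Perm.inv_def, Equiv.apply_symm_apply] at h2
      exact fun he => h2 (congrArg τ he)
    · rw [hρ0] at hb
      exact τ.injective (hb.trans hτb.symm)

private lemma pg_N_val (π : Equiv.Perm (Fin (m + 2))) (b : Fin (m + 2)) (h : π 0 ≠ b) :
    (univ.filter fun σ => (permutationGraph (m + 2)).Adj π σ ∧ σ 0 = b).card
      = numDerangements m + numDerangements (m + 1) := by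
  classical
  have h01 : ((1 : Equiv.Perm (Fin (m + 2))) 0 : Fin (m + 2)) = 0 := rfl
  -- sum of fibers
  have hsum : ∑ c : Fin (m + 2),
      (univ.filter fun σ => (permutationGraph (m + 2)).Adj 1 σ ∧ σ 0 = c).card
        = numDerangements (m + 2) := by
    rw [← pg_deg (1 : Equiv.Perm (Fin (m + 2)))]
    rw [Finset.card_eq_sum_card_fiberwise
      (f := fun σ : Equiv.Perm (Fin (m + 2)) => σ 0) (t := univ) (fun x _ => mem_univ _)]
    refine Finset.sum_congr rfl fun c _ => ?_
    rw [Finset.filter_filter]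
  have hzero1 : ((1 : Equiv.Perm (Fin (m + 2))) 0 : Fin (m + 2)) ≠ 1 := by
    rw [h01]; simp [Fin.ext_iff]
  set c0 := (univ.filter fun σ => (permutationGraph (m + 2)).Adj 1 σ ∧ σ 0 = 1).card with hc0
  have hrest : ∀ c : Fin (m + 2), c ≠ 0 →
      (univ.filter fun σ => (permutationGraph (m + 2)).Adj 1 σ ∧ σ 0 = c).card = c0 := by
    intro c hc
    exact pg_N_const _ _ _ _ (by rw [h01]; exact fun he => hc he.symm) hzero1
  have hsplit : ∑ c : Fin (m + 2),
      (univ.filter fun σ => (permutationGraph (m + 2)).Adj 1 σ ∧ σ 0 = c).card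
        = (m + 1) * c0 := by
    rw [← Finset.sum_erase_add _ _ (mem_univ (0 : Fin (m + 2)))]
    rw [pg_N_zero 1 0 h01, add_zero]
    rw [Finset.sum_congr rfl (fun c hc => hrest c (Finset.ne_of_mem_erase hc))]
    rw [Finset.sum_const, Finset.card_erase_of_mem (mem_univ _), Finset.card_univ]
    simp [Fintype.card_perm, smul_eq_mul]
  have hkey : (m + 1) * c0 = (m + 1) * (numDerangements m + numDerangements (m + 1)) := by
    rw [← hsplit, hsum, numDerangements_add_two]
  have hc0val : c0 = numDerangements m + numDerangements (m + 1) :=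
    Nat.eq_of_mul_eq_mul_left (Nat.succ_pos m) hkey
  rw [pg_N_const π 1 b 1 h hzero1, ← hc0, hc0val]

/-- For `n ≥ 2`, both `d(n)` and `-d(n)/(n-1) = -(d(n-1) + d(n-2))` are eigenvalues
of the adjacency matrix of the permutation graph `P(n)`, where `d` counts
derangements. -/
theorem permutationGraph_eigenvalues (n : ℕ) (hn : 2 ≤ n) :
    (∃ v : Equiv.Perm (Fin n) → ℝ, v ≠ 0 ∧
      (permutationGraphAdjMatrix n).mulVec v = (numDerangements n : ℝ) • v) ∧
    (∃ v : Equiv.Perm (Fin n) → ℝ, v ≠ 0 ∧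
      (permutationGraphAdjMatrix n).mulVec v
        = (-((numDerangements (n - 1) : ℝ) + (numDerangements (n - 2) : ℝ))) • v) := by
  classical
  obtain ⟨m, rfl⟩ : ∃ m, n = m + 2 := ⟨n - 2, by omega⟩
  have e1 : m + 2 - 1 = m + 1 := rfl
  have e2 : m + 2 - 2 = m := rfl
  have hrec : (numDerangements (m + 2) : ℝ)
      = (m + 1) * ((numDerangements m : ℝ) + (numDerangements (m + 1) : ℝ)) := by
    rw [numDerangements_add_two]; push_cast; ring
  constructor
  · refine ⟨fun _ => 1, fun h => one_ne_zero (congrFun h 1), ?_⟩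
    funext π
    simp only [Matrix.mulVec, dotProduct, permutationGraphAdjMatrix, mul_one,
      Pi.smul_apply, smul_eq_mul]
    rw [Finset.sum_boole, pg_deg π]
  · refine ⟨fun π => (m + 2 : ℝ) * (if π 0 = 1 then 1 else 0) - 1, ?_, ?_⟩
    · intro hv
      have h1 := congrFun hv 1
      have h0 : ((1 : Equiv.Perm (Fin (m + 2))) 0 : Fin (m + 2)) = 0 := rfl
      rw [h0] at h1
      simp [Fin.ext_iff] at h1
    · funext π
      simp only [Matrix.mulVec, dotProduct, permutationGraphAdjMatrix, ite_mul,
        one_mul, zero_mul, Pi.smul_apply, smul_eq_mul, e1, e2]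
      rw [← Finset.sum_filter]
      rw [Finset.sum_sub_distrib, ← Finset.mul_sum, Finset.sum_boole, Finset.sum_const,
        Finset.filter_filter, nsmul_eq_mul, mul_one, pg_deg π]
      by_cases h1 : π 0 = 1
      · rw [pg_N_zero π 1 h1, if_pos h1, hrec]
        push_cast
        ring
      · rw [pg_N_val π 1 h1, if_neg h1, hrec]
        push_cast
        ring
end

section
/- Let n ≥ 2. The (n−1)² vectors v_{i,j} − (1/n)·1 ∈ ℝ^{S(n)}, for i, j ∈ {1,…,n−1}, are linearly independent over ℝ (here 1 denotes the all-ones vector indexed by S(n)). -/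
set_option maxHeartbeats 1600000 in
/-- For `n ≥ 2`, the `(n-1)²` vectors `v_{i,j} - (1/n)·𝟙 ∈ ℝ^{S(n)}` for
`i, j ∈ {1,…,n-1}` are linearly independent, where `v_{i,j}` is the characteristic
vector of `S_{i,j} = {π : π i = j}` and `𝟙` is the all-ones vector. -/
theorem shifted_characteristic_vectors_linearIndependent (n : ℕ) (hn : 2 ≤ n) :
    LinearIndependent ℝ
      (fun p : Fin (n - 1) × Fin (n - 1) =>
        (fun π : Equiv.Perm (Fin n) =>
          (if π (Fin.castLE (n.sub_le 1) p.1) = Fin.castLE (n.sub_le 1) p.2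
            then (1 : ℝ) else 0) - 1 / n)) := by
  classical
  rw [Fintype.linearIndependent_iff]
  intro g hg
  rintro ⟨k, l⟩
  set a : Fin n := ⟨n - 1, by omega⟩ with ha
  set k' : Fin n := Fin.castLE (n.sub_le 1) k with hk'
  set l' : Fin n := Fin.castLE (n.sub_le 1) l with hl'
  set s := Equiv.swap k' a with hs
  set t := Equiv.swap l' a with ht
  set π₀ := Equiv.swap k' l' with hπ₀
  have H : ∀ π : Equiv.Perm (Fin n),
      (∑ p : Fin (n-1) × Fin (n-1), g p *
        ((if π (Fin.castLE (n.sub_le 1) p.1) = Fin.castLE (n.sub_le 1) p.2 then (1:ℝ) else 0)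
          - 1/n)) = 0 := by
    intro π
    have h := congrFun hg π
    simpa [Finset.sum_apply] using h
  have key : (∑ p : Fin (n-1) × Fin (n-1), g p *
      ((if π₀ (Fin.castLE (n.sub_le 1) p.1) = Fin.castLE (n.sub_le 1) p.2 then (1:ℝ) else 0)
       - (if (π₀ * s) (Fin.castLE (n.sub_le 1) p.1) = Fin.castLE (n.sub_le 1) p.2 then (1:ℝ) else 0)
       - (if (t * π₀) (Fin.castLE (n.sub_le 1) p.1) = Fin.castLE (n.sub_le 1) p.2 then (1:ℝ) else 0)
       + (if (t * π₀ * s) (Fin.castLE (n.sub_le 1) p.1) = Fin.castLE (n.sub_le 1) p.2 then (1:ℝ) else 0))) = 0 := by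
    have h0 := H π₀
    have h1 := H (π₀ * s)
    have h2 := H (t * π₀)
    have h3 := H (t * π₀ * s)
    calc (∑ p : Fin (n-1) × Fin (n-1), g p *
      ((if π₀ (Fin.castLE (n.sub_le 1) p.1) = Fin.castLE (n.sub_le 1) p.2 then (1:ℝ) else 0)
       - (if (π₀ * s) (Fin.castLE (n.sub_le 1) p.1) = Fin.castLE (n.sub_le 1) p.2 then (1:ℝ) else 0)
       - (if (t * π₀) (Fin.castLE (n.sub_le 1) p.1) = Fin.castLE (n.sub_le 1) p.2 then (1:ℝ) else 0)
       + (if (t * π₀ * s) (Fin.castLE (n.sub_le 1) p.1) = Fin.castLE (n.sub_le 1) p.2 then (1:ℝ) else 0)))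
        = (∑ p : Fin (n-1) × Fin (n-1), g p *
            ((if π₀ (Fin.castLE (n.sub_le 1) p.1) = Fin.castLE (n.sub_le 1) p.2 then (1:ℝ) else 0) - 1/n))
          - (∑ p : Fin (n-1) × Fin (n-1), g p *
            ((if (π₀ * s) (Fin.castLE (n.sub_le 1) p.1) = Fin.castLE (n.sub_le 1) p.2 then (1:ℝ) else 0) - 1/n))
          - (∑ p : Fin (n-1) × Fin (n-1), g p *
            ((if (t * π₀) (Fin.castLE (n.sub_le 1) p.1) = Fin.castLE (n.sub_le 1) p.2 then (1:ℝ) else 0) - 1/n))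
          + (∑ p : Fin (n-1) × Fin (n-1), g p *
            ((if (t * π₀ * s) (Fin.castLE (n.sub_le 1) p.1) = Fin.castLE (n.sub_le 1) p.2 then (1:ℝ) else 0) - 1/n)) := by
          rw [← Finset.sum_sub_distrib, ← Finset.sum_sub_distrib, ← Finset.sum_add_distrib]
          exact Finset.sum_congr rfl (fun p _ => by ring)
      _ = 0 := by rw [h0, h1, h2, h3]; ring
  rw [Finset.sum_eq_single (⟨k, l⟩ : Fin (n-1) × Fin (n-1))] at key
  · -- at (k,l) the bracket equals 2
    have hbr :
        ((if π₀ k' = l' then (1:ℝ) else 0)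
         - (if (π₀ * s) k' = l' then (1:ℝ) else 0)
         - (if (t * π₀) k' = l' then (1:ℝ) else 0)
         + (if (t * π₀ * s) k' = l' then (1:ℝ) else 0)) = 2 := by
      have hk'v : (k' : ℕ) = (k : ℕ) := rfl
      have hl'v : (l' : ℕ) = (l : ℕ) := rfl
      have hav : (a : ℕ) = n - 1 := rfl
      have hk2 := k.isLt
      have hl2 := l.isLt
      simp only [Equiv.Perm.mul_apply, hs, ht, hπ₀, Equiv.swap_apply_def,
        Fin.ext_iff, Fin.coe_castLE, apply_ite (Fin.val : Fin n → ℕ)]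
      split_ifs <;> (try norm_num) <;> exfalso <;> omega
    rw [show (Fin.castLE (n.sub_le 1) (⟨k,l⟩ : Fin (n-1) × Fin (n-1)).1) = k' from rfl,
        show (Fin.castLE (n.sub_le 1) (⟨k,l⟩ : Fin (n-1) × Fin (n-1)).2) = l' from rfl,
        hbr] at key
    linarith
  · rintro ⟨i, j⟩ _ hp
    have hbr :
        ((if π₀ (Fin.castLE (n.sub_le 1) i) = Fin.castLE (n.sub_le 1) j then (1:ℝ) else 0)
         - (if (π₀ * s) (Fin.castLE (n.sub_le 1) i) = Fin.castLE (n.sub_le 1) j then (1:ℝ) else 0)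
         - (if (t * π₀) (Fin.castLE (n.sub_le 1) i) = Fin.castLE (n.sub_le 1) j then (1:ℝ) else 0)
         + (if (t * π₀ * s) (Fin.castLE (n.sub_le 1) i) = Fin.castLE (n.sub_le 1) j then (1:ℝ) else 0)) = 0 := by
      have hij : i ≠ k ∨ j ≠ l := by
        by_contra hc
        push_neg at hc
        exact hp (by simp [hc.1, hc.2])
      have hij' : (i:ℕ) ≠ k ∨ (j:ℕ) ≠ l := by
        rcases hij with h | h
        · exact Or.inl (fun hh => h (Fin.ext hh))
        · exact Or.inr (fun hh => h (Fin.ext hh))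
      have hk'v : (k' : ℕ) = (k : ℕ) := rfl
      have hl'v : (l' : ℕ) = (l : ℕ) := rfl
      have hav : (a : ℕ) = n - 1 := rfl
      have hi'v : ((Fin.castLE (n.sub_le 1) i : Fin n) : ℕ) = (i : ℕ) := rfl
      have hj'v : ((Fin.castLE (n.sub_le 1) j : Fin n) : ℕ) = (j : ℕ) := rfl
      have hi := i.isLt
      have hj := j.isLt
      have hk2 := k.isLt
      have hl2 := l.isLt
      simp only [Equiv.Perm.mul_apply, hs, ht, hπ₀, Equiv.swap_apply_def,
        Fin.ext_iff, Fin.coe_castLE, apply_ite (Fin.val : Fin n → ℕ)]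
      split_ifs <;> (try norm_num) <;> exfalso <;> omega
    rw [hbr, mul_zero]
  · intro h
    exact absurd (Finset.mem_univ _) h
end

section
/- Let n ≥ 3, let y assign a real number y(i,j) to each ordered pair (i,j) with i, j ∈ {1,…,n−1}, and let c ∈ ℝ. Suppose that for every derangement π of {1,…,n} one has c + Σ y(i,j) = 0, the sum being over all pairs (i,j) with i, j ∈ {1,…,n−1} and π(i) = j. Then there exists t ∈ ℝ such that y(i,j) = t for every pair with i ≠ j, and c = −(n−2)·t. -/
/-! Auxiliary machinery for `kernel_of_derangement_rows_with_ones`. -/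

private lemma kdr_exists_perm_four (n : ℕ) (hn : 4 ≤ n) (a b c d : Fin n)
    (hab : a ≠ b) (hac : a ≠ c) (had : a ≠ d) (hbc : b ≠ c) (hbd : b ≠ d) (hcd : c ≠ d) :
    ∃ g : Equiv.Perm (Fin n), g ⟨0, by omega⟩ = a ∧ g ⟨1, by omega⟩ = b ∧
      g ⟨2, by omega⟩ = c ∧ g ⟨3, by omega⟩ = d := by
  obtain ⟨x0, hx0⟩ : ∃ x : Fin n, (x : ℕ) = 0 := ⟨⟨0, by omega⟩, rfl⟩
  obtain ⟨x1, hx1⟩ : ∃ x : Fin n, (x : ℕ) = 1 := ⟨⟨1, by omega⟩, rfl⟩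
  obtain ⟨x2, hx2⟩ : ∃ x : Fin n, (x : ℕ) = 2 := ⟨⟨2, by omega⟩, rfl⟩
  obtain ⟨x3, hx3⟩ : ∃ x : Fin n, (x : ℕ) = 3 := ⟨⟨3, by omega⟩, rfl⟩
  have h01 : x0 ≠ x1 := Fin.ne_of_val_ne (by omega)
  have h02 : x0 ≠ x2 := Fin.ne_of_val_ne (by omega)
  have h03 : x0 ≠ x3 := Fin.ne_of_val_ne (by omega)
  have h12 : x1 ≠ x2 := Fin.ne_of_val_ne (by omega)
  have h13 : x1 ≠ x3 := Fin.ne_of_val_ne (by omega)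
  have h23 : x2 ≠ x3 := Fin.ne_of_val_ne (by omega)
  obtain ⟨g1, hg1⟩ : ∃ g : Equiv.Perm (Fin n), g x0 = a :=
    ⟨Equiv.swap x0 a, Equiv.swap_apply_left _ _⟩
  obtain ⟨b1, hb1⟩ : ∃ x : Fin n, g1 x = b := ⟨g1.symm b, g1.apply_symm_apply b⟩
  have hb10 : b1 ≠ x0 := fun h => hab (by rw [← hg1, ← h, hb1])
  obtain ⟨g2, hg20, hg21⟩ : ∃ g : Equiv.Perm (Fin n), g x0 = a ∧ g x1 = b :=
    ⟨g1 * Equiv.swap x1 b1,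
      by rw [Equiv.Perm.mul_apply, Equiv.swap_apply_of_ne_of_ne h01 (Ne.symm hb10)]; exact hg1,
      by rw [Equiv.Perm.mul_apply, Equiv.swap_apply_left]; exact hb1⟩
  obtain ⟨c1, hc1⟩ : ∃ x : Fin n, g2 x = c := ⟨g2.symm c, g2.apply_symm_apply c⟩
  have hc10 : c1 ≠ x0 := fun h => hac (by rw [← hg20, ← h, hc1])
  have hc11 : c1 ≠ x1 := fun h => hbc (by rw [← hg21, ← h, hc1])
  obtain ⟨g3, hg30, hg31, hg32⟩ :
      ∃ g : Equiv.Perm (Fin n), g x0 = a ∧ g x1 = b ∧ g x2 = c :=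
    ⟨g2 * Equiv.swap x2 c1,
      by rw [Equiv.Perm.mul_apply, Equiv.swap_apply_of_ne_of_ne h02 (Ne.symm hc10)]; exact hg20,
      by rw [Equiv.Perm.mul_apply, Equiv.swap_apply_of_ne_of_ne h12 (Ne.symm hc11)]; exact hg21,
      by rw [Equiv.Perm.mul_apply, Equiv.swap_apply_left]; exact hc1⟩
  obtain ⟨d1, hd1⟩ : ∃ x : Fin n, g3 x = d := ⟨g3.symm d, g3.apply_symm_apply d⟩
  have hd10 : d1 ≠ x0 := fun h => had (by rw [← hg30, ← h, hd1])
  have hd11 : d1 ≠ x1 := fun h => hbd (by rw [← hg31, ← h, hd1])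
  have hd12 : d1 ≠ x2 := fun h => hcd (by rw [← hg32, ← h, hd1])
  have hfin0 : x0 = ⟨0, by omega⟩ := Fin.ext (by simp [hx0])
  have hfin1 : x1 = ⟨1, by omega⟩ := Fin.ext (by simp [hx1])
  have hfin2 : x2 = ⟨2, by omega⟩ := Fin.ext (by simp [hx2])
  have hfin3 : x3 = ⟨3, by omega⟩ := Fin.ext (by simp [hx3])
  refine ⟨g3 * Equiv.swap x3 d1, ?_, ?_, ?_, ?_⟩
  · rw [← hfin0, Equiv.Perm.mul_apply, Equiv.swap_apply_of_ne_of_ne h03 (Ne.symm hd10)]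
    exact hg30
  · rw [← hfin1, Equiv.Perm.mul_apply, Equiv.swap_apply_of_ne_of_ne h13 (Ne.symm hd11)]
    exact hg31
  · rw [← hfin2, Equiv.Perm.mul_apply, Equiv.swap_apply_of_ne_of_ne h23 (Ne.symm hd12)]
    exact hg32
  · rw [← hfin3, Equiv.Perm.mul_apply, Equiv.swap_apply_left]; exact hd1

private def kdrCst (n : ℕ) : Fin (n - 1) → Fin n := Fin.castLE (n.sub_le 1)

private noncomputable def kdrS (n : ℕ) (y : Fin (n - 1) → Fin (n - 1) → ℝ)
    (π : Equiv.Perm (Fin n)) : ℝ :=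
  ∑ i : Fin (n - 1),
    if h : ((π (kdrCst n i)) : ℕ) < n - 1 then y i ⟨π (kdrCst n i), h⟩ else 0

private lemma kdr_inner_sum (n : ℕ) (v : Fin n) (f : Fin (n - 1) → ℝ) :
    (∑ j : Fin (n - 1), if v = Fin.castLE (n.sub_le 1) j then f j else 0)
      = if h : (v : ℕ) < n - 1 then f ⟨v, h⟩ else 0 := by
  by_cases h : (v : ℕ) < n - 1
  · rw [dif_pos h]
    have key : ∀ j : Fin (n - 1),
        (v = Fin.castLE (n.sub_le 1) j) = ((⟨(v : ℕ), h⟩ : Fin (n - 1)) = j) := by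
      intro j
      simp only [Fin.ext_iff, Fin.coe_castLE]
    simp only [key]
    rw [Finset.sum_ite_eq]
    simp
  · rw [dif_neg h]
    apply Finset.sum_eq_zero
    intro j _
    rw [if_neg]
    intro hv
    exact h (by rw [hv, Fin.coe_castLE]; exact j.isLt)

private lemma kdr_S_eq (n : ℕ) (y : Fin (n - 1) → Fin (n - 1) → ℝ)
    (π : Equiv.Perm (Fin n)) :
    (∑ i : Fin (n - 1), ∑ j : Fin (n - 1),
        if π (Fin.castLE (n.sub_le 1) i) = Fin.castLE (n.sub_le 1) j
          then y i j else 0) = kdrS n y π :=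
  Finset.sum_congr rfl fun i _ => kdr_inner_sum n (π (kdrCst n i)) (y i)

private lemma kdr_term_eval (n : ℕ) (y : Fin (n - 1) → Fin (n - 1) → ℝ)
    (i b : Fin (n - 1)) (v : Fin n) (hv : v = kdrCst n b) :
    (if h : (v : ℕ) < n - 1 then y i ⟨v, h⟩ else 0) = y i b := by
  subst hv
  rw [dif_pos (show ((kdrCst n b : Fin n) : ℕ) < n - 1 from b.isLt)]
  rfl

private lemma kdr_term_zero (n : ℕ) (y : Fin (n - 1) → Fin (n - 1) → ℝ)
    (i : Fin (n - 1)) (v : Fin n) (hv : (v : ℕ) = n - 1) :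
    (if h : (v : ℕ) < n - 1 then y i ⟨v, h⟩ else 0) = 0 := by
  rw [dif_neg (by omega)]

section Core

variable (n : ℕ) (y : Fin (n - 1) → Fin (n - 1) → ℝ) (c : ℝ)

/-- Row comparison: `y u b = y u b'` for `u, b, b'` pairwise distinct, `n ≥ 4`. -/
private lemma kdr_row (hn : 4 ≤ n)
    (hval : ∀ π : Equiv.Perm (Fin n), (∀ x, π x ≠ x) → c + kdrS n y π = 0)
    (u b b' : Fin (n - 1)) (hub : u ≠ b) (hub' : u ≠ b') (hbb' : b ≠ b') :
    y u b = y u b' := by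
  haveI : NeZero n := ⟨by omega⟩
  set m' : Fin n := ⟨n - 1, by omega⟩ with hm'def
  have hm' : ∀ i : Fin (n - 1), kdrCst n i ≠ m' := by
    intro i h
    have h2 := congrArg Fin.val h
    have h3 : (i : ℕ) = n - 1 := h2
    have := i.isLt; omega
  have hci : ∀ {i j : Fin (n - 1)}, i ≠ j → kdrCst n i ≠ kdrCst n j :=
    fun h h2 => h (Fin.castLE_inj.mp h2)
  obtain ⟨g, hg0, hg1, hg2, hg3⟩ := kdr_exists_perm_four n hn (kdrCst n u) (kdrCst n b)
    m' (kdrCst n b') (hci hub) (hm' u) (hci hub') (hm' b) (hci hbb') (Ne.symm (hm' b'))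
  have hone : ((1 : Fin n) : ℕ) = 1 := by
    rw [Fin.val_one']; exact Nat.mod_eq_of_lt (by omega)
  set rot : Equiv.Perm (Fin n) := Equiv.addLeft 1 with hrotdef
  have hrotapp : ∀ x : Fin n, rot x = 1 + x := fun x => rfl
  have hrot : ∀ x : Fin n, rot x ≠ x := by
    intro x h
    rw [hrotapp] at h
    have h2 := congrArg Fin.val (add_eq_right.mp h)
    rw [hone] at h2
    simp at h2
  set π : Equiv.Perm (Fin n) := g * rot * g⁻¹ with hπdef
  have happ : ∀ z : Fin n, π (g z) = g (1 + z) := by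
    intro z
    rw [hπdef]
    simp [Equiv.Perm.mul_apply, hrotapp]
  have hπ : ∀ x, π x ≠ x := by
    intro x h
    rw [hπdef] at h
    simp only [Equiv.Perm.mul_apply] at h
    have h2 : rot (g⁻¹ x) = g⁻¹ x := by
      apply g.injective
      rw [h]
      exact (Equiv.apply_symm_apply g x).symm
    exact hrot _ h2
  have hadd : ∀ (k : ℕ) (h1 : k < n) (h2 : k + 1 < n),
      (1 : Fin n) + ⟨k, h1⟩ = ⟨k + 1, h2⟩ := by
    intro k h1 h2
    apply Fin.ext
    rw [Fin.val_add, hone]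
    show (1 + k) % n = k + 1
    rw [Nat.mod_eq_of_lt (by omega), Nat.add_comm]
  have hπu : π (kdrCst n u) = kdrCst n b := by
    rw [← hg0, happ, hadd 0 (by omega) (by omega), hg1]
  have hπm : π m' = kdrCst n b' := by
    rw [← hg2, happ, hadd 2 (by omega) (by omega), hg3]
  set σ : Equiv.Perm (Fin n) := π * Equiv.swap (kdrCst n u) m' with hσdef
  have hσu : σ (kdrCst n u) = kdrCst n b' := by
    rw [hσdef, Equiv.Perm.mul_apply, Equiv.swap_apply_left, hπm]
  have hσm : σ m' = kdrCst n b := by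
    rw [hσdef, Equiv.Perm.mul_apply, Equiv.swap_apply_right, hπu]
  have hσo : ∀ x, x ≠ kdrCst n u → x ≠ m' → σ x = π x := by
    intro x h1 h2
    rw [hσdef, Equiv.Perm.mul_apply, Equiv.swap_apply_of_ne_of_ne h1 h2]
  have hσ : ∀ x, σ x ≠ x := by
    intro x
    by_cases h1 : x = kdrCst n u
    · subst h1; rw [hσu]; exact hci (Ne.symm hub')
    by_cases h2 : x = m'
    · subst h2; rw [hσm]; exact hm' b
    · rw [hσo x h1 h2]; exact hπ x
  have e1 := hval π hπ
  have e2 := hval σ hσ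
  have key : kdrS n y π - kdrS n y σ = y u b - y u b' := by
    unfold kdrS
    rw [← Finset.sum_sub_distrib]
    rw [Finset.sum_eq_single u]
    · rw [kdr_term_eval n y u b _ hπu, kdr_term_eval n y u b' _ hσu]
    · intro i _ hiu
      rw [hσo _ (hci hiu) (hm' i)]
      exact sub_self _
    · intro h; exact absurd (Finset.mem_univ u) h
  linarith

/-- Column comparison: `y a u = y a' u` for `a, a', u` pairwise distinct, `n ≥ 4`. -/
private lemma kdr_col (hn : 4 ≤ n)
    (hval : ∀ π : Equiv.Perm (Fin n), (∀ x, π x ≠ x) → c + kdrS n y π = 0)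
    (a a' u : Fin (n - 1)) (hau : a ≠ u) (ha'u : a' ≠ u) (haa' : a ≠ a') :
    y a u = y a' u := by
  haveI : NeZero n := ⟨by omega⟩
  set m' : Fin n := ⟨n - 1, by omega⟩ with hm'def
  have hm' : ∀ i : Fin (n - 1), kdrCst n i ≠ m' := by
    intro i h
    have h2 := congrArg Fin.val h
    have h3 : (i : ℕ) = n - 1 := h2
    have := i.isLt; omega
  have hmval : (m' : ℕ) = n - 1 := rfl
  have hci : ∀ {i j : Fin (n - 1)}, i ≠ j → kdrCst n i ≠ kdrCst n j :=
    fun h h2 => h (Fin.castLE_inj.mp h2)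
  obtain ⟨g, hg0, hg1, hg2, hg3⟩ := kdr_exists_perm_four n hn (kdrCst n a) (kdrCst n u)
    (kdrCst n a') m' (hci hau) (hci haa') (hm' a) (hci (Ne.symm ha'u)) (hm' u) (hm' a')
  have hone : ((1 : Fin n) : ℕ) = 1 := by
    rw [Fin.val_one']; exact Nat.mod_eq_of_lt (by omega)
  set rot : Equiv.Perm (Fin n) := Equiv.addLeft 1 with hrotdef
  have hrotapp : ∀ x : Fin n, rot x = 1 + x := fun x => rfl
  have hrot : ∀ x : Fin n, rot x ≠ x := by
    intro x h
    rw [hrotapp] at h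
    have h2 := congrArg Fin.val (add_eq_right.mp h)
    rw [hone] at h2
    simp at h2
  set π : Equiv.Perm (Fin n) := g * rot * g⁻¹ with hπdef
  have happ : ∀ z : Fin n, π (g z) = g (1 + z) := by
    intro z
    rw [hπdef]
    simp [Equiv.Perm.mul_apply, hrotapp]
  have hπ : ∀ x, π x ≠ x := by
    intro x h
    rw [hπdef] at h
    simp only [Equiv.Perm.mul_apply] at h
    have h2 : rot (g⁻¹ x) = g⁻¹ x := by
      apply g.injective
      rw [h]
      exact (Equiv.apply_symm_apply g x).symm
    exact hrot _ h2
  have hadd : ∀ (k : ℕ) (h1 : k < n) (h2 : k + 1 < n),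
      (1 : Fin n) + ⟨k, h1⟩ = ⟨k + 1, h2⟩ := by
    intro k h1 h2
    apply Fin.ext
    rw [Fin.val_add, hone]
    show (1 + k) % n = k + 1
    rw [Nat.mod_eq_of_lt (by omega), Nat.add_comm]
  have hπa : π (kdrCst n a) = kdrCst n u := by
    rw [← hg0, happ, hadd 0 (by omega) (by omega), hg1]
  have hπa' : π (kdrCst n a') = m' := by
    rw [← hg2, happ, hadd 2 (by omega) (by omega), hg3]
  set σ : Equiv.Perm (Fin n) := Equiv.swap (kdrCst n u) m' * π with hσdef
  have hσa : σ (kdrCst n a) = m' := by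
    rw [hσdef, Equiv.Perm.mul_apply, hπa, Equiv.swap_apply_left]
  have hσa' : σ (kdrCst n a') = kdrCst n u := by
    rw [hσdef, Equiv.Perm.mul_apply, hπa', Equiv.swap_apply_right]
  have hσo : ∀ x, x ≠ kdrCst n a → x ≠ kdrCst n a' → σ x = π x := by
    intro x h1 h2
    rw [hσdef, Equiv.Perm.mul_apply]
    apply Equiv.swap_apply_of_ne_of_ne
    · intro h; exact h1 (π.injective (by rw [h, hπa]))
    · intro h; exact h2 (π.injective (by rw [h, hπa']))
  have hσ : ∀ x, σ x ≠ x := by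
    intro x
    by_cases h1 : x = kdrCst n a
    · subst h1; rw [hσa]; exact Ne.symm (hm' a)
    by_cases h2 : x = kdrCst n a'
    · subst h2; rw [hσa']; exact hci (Ne.symm ha'u)
    · rw [hσo x h1 h2]; exact hπ x
  have e1 := hval π hπ
  have e2 := hval σ hσ
  have key : kdrS n y π - kdrS n y σ = y a u - y a' u := by
    unfold kdrS
    rw [← Finset.sum_sub_distrib]
    have hzero : ∀ i ∈ (Finset.univ : Finset (Fin (n - 1))), i ∉ ({a, a'} : Finset (Fin (n-1))) →
        ((if h : ((π (kdrCst n i)) : ℕ) < n - 1 then y i ⟨π (kdrCst n i), h⟩ else 0) -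
         (if h : ((σ (kdrCst n i)) : ℕ) < n - 1 then y i ⟨σ (kdrCst n i), h⟩ else 0)) = 0 := by
      intro i _ hi
      simp only [Finset.mem_insert, Finset.mem_singleton, not_or] at hi
      rw [hσo _ (hci hi.1) (hci hi.2)]
      exact sub_self _
    rw [← Finset.sum_subset (Finset.subset_univ ({a, a'} : Finset (Fin (n-1)))) hzero]
    rw [Finset.sum_pair haa']
    rw [kdr_term_eval n y a u _ hπa, kdr_term_eval n y a' u _ hσa',
        kdr_term_zero n y a _ (by rw [hσa]), kdr_term_zero n y a' _ (by rw [hπa'])]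
    ring
  linarith

end Core

/-- Let `n ≥ 3`, let `y` assign a real number to each pair `(i,j)` with
`i, j ∈ {1,…,n-1}`, and let `c ∈ ℝ`. If for every derangement `π` of `{1,…,n}` one
has `c + Σ_{π i = j} y (i,j) = 0`, then there is `t ∈ ℝ` with `y (i,j) = t` for every
pair with `i ≠ j`, and `c = -(n-2)·t`. -/
theorem kernel_of_derangement_rows_with_ones (n : ℕ) (hn : 3 ≤ n)
    (y : Fin (n - 1) → Fin (n - 1) → ℝ) (c : ℝ)
    (hker : ∀ π : Equiv.Perm (Fin n), (∀ i, π i ≠ i) →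
      c + (∑ i : Fin (n - 1), ∑ j : Fin (n - 1),
        if π (Fin.castLE (n.sub_le 1) i) = Fin.castLE (n.sub_le 1) j
          then y i j else 0) = 0) :
    ∃ t : ℝ, (∀ i j : Fin (n - 1), i ≠ j → y i j = t) ∧ c = -((n : ℝ) - 2) * t := by
  have hval : ∀ π : Equiv.Perm (Fin n), (∀ x, π x ≠ x) → c + kdrS n y π = 0 := by
    intro π h
    rw [← kdr_S_eq]
    exact hker π h
  set i0 : Fin (n - 1) := ⟨0, by omega⟩ with hi0
  set j0 : Fin (n - 1) := ⟨1, by omega⟩ with hj0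
  have hi0j0 : i0 ≠ j0 := Fin.ne_of_val_ne (show (0:ℕ) ≠ 1 by omega)
  set t := y i0 j0 with ht
  have hconst : ∀ i j : Fin (n - 1), i ≠ j → y i j = t := by
    rcases lt_or_ge n 4 with h4 | h4
    · -- n = 3
      have h3 : n = 3 := by omega
      subst h3
      have e1 := hker (Equiv.addLeft (1 : Fin 3)) (by decide)
      have e2 := hker (Equiv.addLeft (2 : Fin 3)) (by decide)
      simp only [Fin.sum_univ_succ, Fin.sum_univ_zero] at e1 e2
      simp [Fin.sum_univ_succ, Equiv.addLeft, Fin.ext_iff] at e1 e2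
      intro i j hij
      have f1 : c + y 0 1 = 0 := by exact_mod_cast e1
      have f2 : c + y 1 0 = 0 := by exact_mod_cast e2
      have hti : t = y 0 1 := rfl
      fin_cases i <;> fin_cases j <;> simp_all <;> linarith
    · -- n ≥ 4 : chain using row/col comparisons
      have row := kdr_row n y c h4 hval
      have col := kdr_col n y c h4 hval
      have pair : ∀ i j i' j' : Fin (n - 1), i ≠ j → i' ≠ j' → y i j = y i' j' := by
        intro i j i' j' hij hij'
        by_cases hii' : i = i'
        · subst hii'
          by_cases hjj' : j = j'
          · subst hjj'; rfl
          · exact row i j j' hij hij' hjj'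
        · by_cases hji' : j = i'
          · subst hji'
            by_cases hij2 : i = j'
            · subst hij2
              obtain ⟨k, hki, hkj⟩ : ∃ k : Fin (n - 1), k ≠ i ∧ k ≠ j := by
                have hcard : ((Finset.univ : Finset (Fin (n-1))) \ {i, j}).Nonempty := by
                  rw [← Finset.card_pos, Finset.card_sdiff_of_subset (Finset.subset_univ _)]
                  have hle : ({i, j} : Finset (Fin (n-1))).card ≤ 2 :=
                    le_trans (Finset.card_insert_le _ _) (by simp)
                  have : (Finset.univ : Finset (Fin (n-1))).card = n - 1 := by
                    simp
                  omega
                obtain ⟨k, hk⟩ := hcard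
                simp only [Finset.mem_sdiff, Finset.mem_insert, Finset.mem_singleton,
                  not_or] at hk
                exact ⟨k, hk.2.1, hk.2.2⟩
              calc y i j = y i k := row i j k hij (Ne.symm hki) (Ne.symm hkj)
                _ = y j k := col i j k (Ne.symm hki) (Ne.symm hkj) hij
                _ = y j i := row j k i (Ne.symm hkj) (Ne.symm hij) hki
            · calc y i j = y i j' := row i j j' hij hij2 hij'
                _ = y j j' := col i j j' hij2 hij' hij
          · by_cases hjj' : j = j'
            · subst hjj'
              exact col i i' j hij (Ne.symm hji') hii'
            · calc y i j = y i' j := col i i' j hij (Ne.symm hji') hii'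
                _ = y i' j' := row i' j j' (Ne.symm hji') hij' hjj'
      intro i j hij
      exact pair i j i0 j0 hij hi0j0
  refine ⟨t, hconst, ?_⟩
  -- compute c via the rotation derangement
  haveI : NeZero n := ⟨by omega⟩
  have hone : ((1 : Fin n) : ℕ) = 1 := by
    rw [Fin.val_one']; exact Nat.mod_eq_of_lt (by omega)
  set rot : Equiv.Perm (Fin n) := Equiv.addLeft 1 with hrotdef
  have hrotapp : ∀ x : Fin n, rot x = 1 + x := fun x => rfl
  have hrot : ∀ x : Fin n, rot x ≠ x := by
    intro x h
    rw [hrotapp] at h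
    have h2 := congrArg Fin.val (add_eq_right.mp h)
    rw [hone] at h2
    simp at h2
  have e := hval rot hrot
  have hval_rot : ∀ i : Fin (n - 1), ((rot (kdrCst n i)) : ℕ) = (i : ℕ) + 1 := by
    intro i
    have hcst : ((kdrCst n i : Fin n) : ℕ) = (i : ℕ) := rfl
    rw [hrotapp, Fin.val_add, hone, hcst]
    have := i.isLt
    rw [Nat.mod_eq_of_lt (by omega), Nat.add_comm]
  have hSrot : kdrS n y rot = ((n : ℝ) - 2) * t := by
    unfold kdrS
    have step : ∀ i : Fin (n - 1),
        (if h : ((rot (kdrCst n i)) : ℕ) < n - 1 then y i ⟨rot (kdrCst n i), h⟩ else 0)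
          = if (i : ℕ) + 1 < n - 1 then t else 0 := by
      intro i
      by_cases hc : (i : ℕ) + 1 < n - 1
      · rw [dif_pos (by rw [hval_rot]; exact hc), if_pos hc]
        apply hconst
        intro heq
        have h2 : (i : ℕ) = ((rot (kdrCst n i)) : ℕ) := congrArg Fin.val heq
        rw [hval_rot] at h2
        omega
      · rw [dif_neg (by rw [hval_rot]; exact hc), if_neg hc]
    rw [Finset.sum_congr rfl fun i _ => step i]
    rw [Finset.sum_ite, Finset.sum_const, Finset.sum_const_zero, add_zero]
    have hfilter : (Finset.univ.filter (fun i : Fin (n - 1) => (i : ℕ) + 1 < n - 1)).card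
        = n - 2 := by
      have heq : (Finset.univ.filter (fun i : Fin (n - 1) => (i : ℕ) + 1 < n - 1))
          = Finset.map (Fin.castLEEmb (show n - 2 ≤ n - 1 by omega)) Finset.univ := by
        ext i
        simp only [Finset.mem_filter, Finset.mem_univ, true_and, Finset.mem_map]
        constructor
        · intro h
          exact ⟨⟨(i : ℕ), by omega⟩, Fin.ext rfl⟩
        · rintro ⟨k, -, rfl⟩
          have hv : ((Fin.castLEEmb (show n - 2 ≤ n - 1 by omega) k : Fin (n - 1)) : ℕ)
              = (k : ℕ) := rfl
          have hk := k.isLt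
          omega
      rw [heq, Finset.card_map]
      simp
    rw [hfilter, nsmul_eq_mul]
    congr 1
    have : ((n - 2 : ℕ) : ℝ) = (n : ℝ) - 2 := by
      rw [Nat.cast_sub (by omega)]; norm_num
    exact this
  rw [hSrot] at e
  linarith
end

section
/- Let n > 6 and let S be an intersecting family of permutations in S(n) with |S| = (n−1)!. Then the characteristic vector v_S ∈ ℝ^{S(n)} of S lies in the real span of the vectors v_{i,j} for i, j ∈ {1,…,n} (equivalently, v_S − (1/n)·1 lies in the span of the vectors v_{i,j} − (1/n)·1 for i, j ∈ {1,…,n−1}). -/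
open Finset Equiv

section Hall

variable {α : Type*} [Fintype α] [DecidableEq α]

lemma exists_perm_avoiding (B : α → Finset α) (b b' : ℕ)
    (hcol : ∀ j, (B j).card ≤ b)
    (hval : ∀ v, (univ.filter fun j => v ∈ B j).card ≤ b')
    (hbb : b + b' ≤ Fintype.card α) :
    ∃ σ : Equiv.Perm α, ∀ j, σ j ∉ B j := by
  classical
  set t : α → Finset α := fun j => univ \ B j with ht
  have hall : ∀ s : Finset α, s.card ≤ (s.biUnion t).card := by
    intro s
    rcases s.eq_empty_or_nonempty with rfl | ⟨j₀, hj₀⟩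
    · simp
    by_cases hs : s.card ≤ Fintype.card α - b
    · have h1 : (t j₀).card = Fintype.card α - (B j₀).card := by
        simp [ht, card_sdiff_of_subset (subset_univ _), card_univ]
      have h2 : (t j₀).card ≤ (s.biUnion t).card :=
        card_le_card (subset_biUnion_of_mem t hj₀)
      have := hcol j₀
      omega
    · have hbig : s.biUnion t = univ := by
        apply eq_univ_of_forall
        intro v
        by_contra hv
        have hsub : s ⊆ univ.filter fun j => v ∈ B j := by
          intro j hj
          simp only [mem_filter, mem_univ, true_and]
          by_contra hvB
          exact hv (mem_biUnion.2 ⟨j, hj, by simp [ht, hvB]⟩)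
        have h3 := card_le_card hsub
        have h4 := hval v
        have h5 : s.card ≤ Fintype.card α := by
          simpa [card_univ] using card_le_univ s (α := α)
        omega
      rw [hbig, card_univ]
      exact card_le_univ s
  obtain ⟨f, hinj, hf⟩ := (Finset.all_card_le_biUnion_card_iff_exists_injective t).1 hall
  refine ⟨Equiv.ofBijective f ((Finite.injective_iff_bijective).1 hinj), fun j => ?_⟩
  have := hf j
  simp only [ht, mem_sdiff] at this
  exact this.2

/-- regular version, for Latin-rectangle completion -/
lemma exists_perm_avoiding_reg (B : α → Finset α) (r : ℕ) (hr : 0 < r)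
    (hcol : ∀ j, r ≤ (univ \ B j).card)
    (hval : ∀ v, (univ.filter fun j => v ∉ B j).card ≤ r) :
    ∃ σ : Equiv.Perm α, ∀ j, σ j ∉ B j := by
  classical
  set t : α → Finset α := fun j => univ \ B j with ht
  have hall : ∀ s : Finset α, s.card ≤ (s.biUnion t).card := by
    intro s
    have key : s.card * r ≤ (s.biUnion t).card * r := by
      calc s.card * r = ∑ _j ∈ s, r := by rw [sum_const, smul_eq_mul]
        _ ≤ ∑ j ∈ s, (t j).card := sum_le_sum fun j _ => hcol j
        _ = ∑ j ∈ s, ∑ v ∈ univ, (if v ∈ t j then 1 else 0) := by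
            refine sum_congr rfl fun j _ => ?_
            rw [sum_ite_mem, univ_inter, card_eq_sum_ones]
        _ = ∑ v ∈ univ, ∑ j ∈ s, (if v ∈ t j then 1 else 0) := sum_comm
        _ = ∑ v ∈ s.biUnion t, ∑ j ∈ s, (if v ∈ t j then 1 else 0) := by
            refine (sum_subset (subset_univ _) fun v _ hv => ?_).symm
            refine sum_eq_zero fun j hj => ?_
            have : v ∉ t j := fun hvt => hv (mem_biUnion.2 ⟨j, hj, hvt⟩)
            simp [this]
        _ ≤ ∑ _v ∈ s.biUnion t, r := by
            refine sum_le_sum fun v _ => ?_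
            calc ∑ j ∈ s, (if v ∈ t j then 1 else 0)
                = (s.filter fun j => v ∈ t j).card := by
                  rw [card_filter]
              _ ≤ (univ.filter fun j => v ∉ B j).card := by
                  apply card_le_card
                  intro j hj
                  simp only [mem_filter, ht, mem_sdiff, mem_univ, true_and] at hj ⊢
                  exact hj.2
              _ ≤ r := hval v
        _ = (s.biUnion t).card * r := by rw [sum_const, smul_eq_mul]
    exact Nat.le_of_mul_le_mul_right key hr
  obtain ⟨f, hinj, hf⟩ := (Finset.all_card_le_biUnion_card_iff_exists_injective t).1 hall
  refine ⟨Equiv.ofBijective f ((Finite.injective_iff_bijective).1 hinj), fun j => ?_⟩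
  have := hf j
  simp only [ht, mem_sdiff] at this
  exact this.2

end Hall

section Build

variable {n : ℕ}

/-- Build a permutation that is the identity off `T`, permutes `T`, and avoids
small forbidden sets on `T`. -/
lemma exists_perm_on_avoiding {n : ℕ} (T : Finset (Fin n)) (B : Fin n → Finset (Fin n))
    (b b' : ℕ) (hcol : ∀ j ∈ T, (B j).card ≤ b)
    (hval : ∀ v : Fin n, (T.filter fun j => v ∈ B j).card ≤ b')
    (hbb : b + b' ≤ T.card) :
    ∃ ρ : Equiv.Perm (Fin n), (∀ j, j ∉ T → ρ j = j) ∧ ∀ j ∈ T, ρ j ∈ T ∧ ρ j ∉ B j := by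
  classical
  set B' : {x // x ∈ T} → Finset {x // x ∈ T} := fun j => (B j.1).subtype (· ∈ T) with hB'
  have hcard : Fintype.card {x // x ∈ T} = T.card := Fintype.card_coe T
  obtain ⟨σ, hσ⟩ := exists_perm_avoiding B' b b'
    (fun j => by
      calc (B' j).card ≤ ((B j.1).filter (· ∈ T)).card := by
            rw [hB', Finset.card_subtype]
        _ ≤ (B j.1).card := card_filter_le _ _
        _ ≤ b := hcol j.1 j.2)
    (fun v => by
      calc (univ.filter fun j => v ∈ B' j).card
          ≤ (T.filter fun j => (v : Fin n) ∈ B j).card := by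
            apply card_le_card_of_injOn (fun j => j.1)
            · intro j hj
              simp only [mem_coe, mem_filter, hB', Finset.mem_subtype] at hj ⊢
              exact ⟨j.2, hj.2⟩
            · exact fun x _ y _ h => Subtype.ext h
        _ ≤ b' := hval v)
    (by rw [hcard]; exact hbb)
  refine ⟨Equiv.Perm.ofSubtype σ, fun j hj => Equiv.Perm.ofSubtype_apply_of_not_mem σ hj,
    fun j hj => ?_⟩
  rw [Equiv.Perm.ofSubtype_apply_of_mem σ hj]
  refine ⟨(σ ⟨j, hj⟩).2, fun hmem => ?_⟩
  have := hσ ⟨j, hj⟩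
  rw [hB'] at this
  exact this (Finset.mem_subtype.2 hmem)

/-- Extend a pairwise-disjoint family of permutations to one of size `n`. -/
lemma extend_clique {n : ℕ} (hn : 0 < n) (R : Finset (Equiv.Perm (Fin n)))
    (hR : ∀ ρ ∈ R, ∀ ρ' ∈ R, ρ ≠ ρ' → ∀ x, ρ x ≠ ρ' x) (hcard : R.card ≤ n) :
    ∃ K, R ⊆ K ∧ K.card = n ∧
      ∀ ρ ∈ K, ∀ ρ' ∈ K, ρ ≠ ρ' → ∀ x, ρ x ≠ ρ' x := by
  classical
  obtain ⟨k, hk⟩ : ∃ k, n - R.card = k := ⟨_, rfl⟩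
  induction k generalizing R with
  | zero => exact ⟨R, Finset.Subset.refl R, by omega, hR⟩
  | succ k ih =>
    have hRlt : R.card < n := by omega
    set B : Fin n → Finset (Fin n) := fun j => R.image (fun ρ => ρ j) with hB
    have hBcard : ∀ j, (B j).card = R.card := fun j =>
      card_image_of_injOn fun ρ hρ ρ' hρ' h => by
        by_contra hne; exact hR ρ hρ ρ' hρ' hne j h
    obtain ⟨τ, hτ⟩ := exists_perm_avoiding_reg B (n - R.card) (by omega)
      (fun j => by
        rw [card_sdiff_of_subset (subset_univ _), card_univ, Fintype.card_fin, hBcard])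
      (fun v => by
        have hin : R.card ≤ (univ.filter fun j => v ∈ B j).card := by
          apply card_le_card_of_injOn (fun ρ => ρ⁻¹ v)
          · intro ρ hρ
            simp only [mem_coe, mem_filter, mem_univ, true_and, hB, mem_image]
            exact ⟨ρ, hρ, by simp⟩
          · intro ρ hρ ρ' hρ' h
            by_contra hne
            simp only at h
            refine hR ρ hρ ρ' hρ' hne (ρ⁻¹ v) ?_
            rw [show ρ (ρ⁻¹ v) = v from by simp, h, show ρ' (ρ'⁻¹ v) = v from by simp]
        have hsplit : (univ.filter fun j => v ∈ B j).card
            + (univ.filter fun j => v ∉ B j).card = n := by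
          have := Finset.card_filter_add_card_filter_not
            (s := (univ : Finset (Fin n))) (p := fun j => v ∈ B j)
          simpa [card_univ] using this
        omega)
    have hτR : τ ∉ R := by
      intro hmem
      exact hτ ⟨0, hn⟩ (by rw [hB]; exact mem_image.2 ⟨τ, hmem, rfl⟩)
    have hstep : ∀ ρ ∈ R, ∀ x, τ x ≠ ρ x := by
      intro ρ hρ x h
      exact hτ x (by rw [hB]; exact mem_image.2 ⟨ρ, hρ, h.symm⟩)
    obtain ⟨K, hKsub, hKcard, hKdisj⟩ := ih (insert τ R)
      (by
        intro ρ hρ ρ' hρ' hne x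
        rcases Finset.mem_insert.1 hρ with h1 | h1
        · rcases Finset.mem_insert.1 hρ' with h2 | h2
          · exact absurd (h1.trans h2.symm) hne
          · subst h1; exact hstep ρ' h2 x
        · rcases Finset.mem_insert.1 hρ' with h2 | h2
          · subst h2; exact fun h => hstep ρ h1 x h.symm
          · exact hR ρ h1 ρ' h2 hne x)
      (by rw [Finset.card_insert_of_notMem hτR]; omega)
      (by rw [Finset.card_insert_of_notMem hτR]; omega)
    exact ⟨K, (Finset.subset_insert τ R).trans hKsub, hKcard, hKdisj⟩

/-- A maximum intersecting family meets every clique of `n` pairwise disjoint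
permutations. -/
lemma clique_meets {n : ℕ} (hn : 0 < n) (A : Finset (Perm (Fin n)))
    (hA : ∀ π ∈ A, ∀ σ ∈ A, ∃ i, π i = σ i) (hcard : A.card = (n - 1).factorial)
    (K : Finset (Perm (Fin n))) (hK : K.card = n)
    (hKd : ∀ ρ ∈ K, ∀ ρ' ∈ K, ρ ≠ ρ' → ∀ x, ρ x ≠ ρ' x) :
    ∃ ρ ∈ K, ρ ∈ A := by
  classical
  set g : Perm (Fin n) → ℕ := fun s => (K.filter fun ρ => s * ρ ∈ A).card with hg
  have hle : ∀ s, g s ≤ 1 := by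
    intro s
    refine card_le_one.2 fun ρ hρ ρ' hρ' => ?_
    simp only [mem_filter] at hρ hρ'
    by_contra hne
    obtain ⟨i, hi⟩ := hA _ hρ.2 _ hρ'.2
    simp only [Perm.mul_apply] at hi
    exact hKd ρ hρ.1 ρ' hρ'.1 hne i (s.injective hi)
  have hinner : ∀ ρ : Perm (Fin n),
      (univ.filter fun s => s * ρ ∈ A).card = A.card := by
    intro ρ
    have : (univ.filter fun s => s * ρ ∈ A) = A.image (fun a => a * ρ⁻¹) := by
      ext s
      simp only [mem_filter, mem_univ, true_and, mem_image]
      constructor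
      · intro h; exact ⟨s * ρ, h, by group⟩
      · rintro ⟨a, ha, rfl⟩; simpa using ha
    rw [this, card_image_of_injective _ (mul_left_injective ρ⁻¹)]
  have hsum : ∑ s ∈ univ, g s = Fintype.card (Perm (Fin n)) := by
    calc ∑ s ∈ univ, g s
        = ∑ s ∈ univ, ∑ ρ ∈ K, (if s * ρ ∈ A then 1 else 0) := by
          refine sum_congr rfl fun s _ => ?_
          show (K.filter fun ρ => s * ρ ∈ A).card = _
          rw [card_filter]
      _ = ∑ ρ ∈ K, ∑ s ∈ univ, (if s * ρ ∈ A then 1 else 0) := sum_comm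
      _ = ∑ ρ ∈ K, (univ.filter fun s => s * ρ ∈ A).card := by
          refine sum_congr rfl fun ρ _ => ?_
          rw [card_filter]
      _ = ∑ _ρ ∈ K, A.card := sum_congr rfl fun ρ _ => hinner ρ
      _ = n * (n - 1).factorial := by rw [sum_const, smul_eq_mul, hK, hcard]
      _ = n.factorial := Nat.mul_factorial_pred hn.ne'
      _ = Fintype.card (Perm (Fin n)) := by rw [Fintype.card_perm, Fintype.card_fin]
  have h1 : g 1 = 1 := by
    by_contra h
    have h0 : g 1 = 0 := by have := hle 1; omega
    have hlt : ∑ s ∈ univ, g s < ∑ _s ∈ (univ : Finset (Perm (Fin n))), 1 :=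
      sum_lt_sum (fun i _ => hle i) ⟨1, mem_univ 1, by omega⟩
    rw [sum_const, smul_eq_mul, mul_one, card_univ, hsum] at hlt
    omega
  have : (K.filter fun ρ => (1 : Perm (Fin n)) * ρ ∈ A).Nonempty := by
    rw [← card_pos]
    have : g 1 = (K.filter fun ρ => (1 : Perm (Fin n)) * ρ ∈ A).card := rfl
    omega
  obtain ⟨ρ, hρ⟩ := this
  simp only [mem_filter, one_mul] at hρ
  exact ⟨ρ, hρ.1, hρ.2⟩

lemma card_filter_eval_le1 (T : Finset (Fin n)) (a : Perm (Fin n)) (v : Fin n) :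
    (T.filter fun j => v ∈ ({a j} : Finset (Fin n))).card ≤ 1 := by
  classical
  refine le_trans (card_le_card ?_) (le_of_eq (card_singleton (a⁻¹ v)))
  intro j hj
  simp only [mem_filter, mem_singleton] at hj ⊢
  rw [hj.2]; simp

lemma card_filter_eval_le2 (T : Finset (Fin n)) (a b : Perm (Fin n)) (v : Fin n) :
    (T.filter fun j => v ∈ ({a j, b j} : Finset (Fin n))).card ≤ 2 := by
  classical
  refine le_trans (card_le_card (?_ : _ ⊆ ({a⁻¹ v, b⁻¹ v} : Finset (Fin n)))) ?_
  · intro j hj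
    simp only [mem_filter, mem_insert, mem_singleton] at hj ⊢
    rcases hj.2 with h | h
    · left; rw [h]; simp
    · right; rw [h]; simp
  · exact le_trans (card_insert_le _ _) (by simp)

lemma card_filter_eval_le3 (T : Finset (Fin n)) (a b c : Perm (Fin n)) (v : Fin n) :
    (T.filter fun j => v ∈ ({a j, b j, c j} : Finset (Fin n))).card ≤ 3 := by
  classical
  refine le_trans (card_le_card (?_ : _ ⊆ ({a⁻¹ v, b⁻¹ v, c⁻¹ v} : Finset (Fin n)))) ?_
  · intro j hj
    simp only [mem_filter, mem_insert, mem_singleton] at hj ⊢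
    rcases hj.2 with h | h | h
    · left; rw [h]; simp
    · right; left; rw [h]; simp
    · right; right; rw [h]; simp
  · refine le_trans (card_insert_le _ _) (Nat.succ_le_succ ?_)
    exact le_trans (card_insert_le _ _) (by simp)

section Main

variable (hn : 7 ≤ n) (A : Finset (Perm (Fin n)))
  (hA : ∀ π ∈ A, ∀ σ ∈ A, ∃ i, π i = σ i)
  (hcard : A.card = (n - 1).factorial)
  (h1 : (1 : Perm (Fin n)) ∈ A)

include hn hA hcard h1

/-- Claim C : shrink the fixed-point set of a member of `A` by one. -/
lemma claimC (π : Perm (Fin n)) (hπA : π ∈ A) (F : Finset (Fin n))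
    (hF : ∀ j, j ∈ F ↔ π j = j) (hF2 : 2 ≤ F.card) (hFu : F ≠ univ)
    (x : Fin n) (hx : x ∈ F) (σ : Perm (Fin n)) (hσA : σ ∈ A) (hσx : σ x ≠ x) :
    ∃ τ ∈ A, ∀ j, τ j = j ↔ j ∈ F.erase x := by
  classical
  set M : Finset (Fin n) := univ \ F with hM
  have hMx : x ∉ M := by simp [hM, hx]
  have hMne : M.Nonempty := by
    rw [hM, sdiff_nonempty]
    intro hsub
    exact hFu (eq_univ_of_forall fun j => hsub (mem_univ j))
  have hMF : ∀ j, j ∈ M ↔ j ∉ F := by intro j; simp [hM]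
  -- the row τ : identity on F.erase x, deranges insert x M
  obtain ⟨τ, hτ_out, hτ_in⟩ := exists_perm_on_avoiding (insert x M)
    (fun j => {(1 : Perm (Fin n)) j}) 1 1
    (fun j _ => by simp)
    (fun v => card_filter_eval_le1 _ _ v)
    (by rw [card_insert_of_notMem hMx]; have := hMne.card_pos; omega)
  have hτx : τ x ∈ M := by
    obtain ⟨h1', h2'⟩ := hτ_in x (mem_insert_self x M)
    rcases mem_insert.1 h1' with h | h
    · exact absurd h (by simpa using h2')
    · exact h
  -- the row rM : identity on M, deranges F
  obtain ⟨rM, hrM_out, hrM_in⟩ := exists_perm_on_avoiding F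
    (fun j => {(1 : Perm (Fin n)) j}) 1 1
    (fun j _ => by simp)
    (fun v => card_filter_eval_le1 _ _ v)
    (by omega)
  -- the row rx : fixes x, avoids τ, rM, σ elsewhere
  obtain ⟨rx, hrx_out, hrx_in⟩ := exists_perm_on_avoiding (univ.erase x)
    (fun j => {τ j, rM j, σ j}) 3 3
    (fun j _ => le_trans (card_insert_le _ _)
      (Nat.succ_le_succ (le_trans (card_insert_le _ _) (by simp))))
    (fun v => card_filter_eval_le3 _ _ _ _ v)
    (by rw [card_erase_of_mem (mem_univ x), card_univ, Fintype.card_fin]; omega)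
  have hrxx : rx x = x := hrx_out x (by simp)
  -- basic facts
  have hτ_fix : ∀ j, τ j = j ↔ j ∈ F.erase x := by
    intro j
    constructor
    · intro h
      by_contra hj
      have hjT : j ∈ insert x M := by
        rcases mem_insert.1 (mem_insert.2 (by
          by_cases hjx : j = x
          · exact Or.inl hjx
          · right
            rw [hMF]
            intro hjF
            exact hj (mem_erase.2 ⟨hjx, hjF⟩))) with h' | h'
        · exact mem_insert.2 (Or.inl h')
        · exact mem_insert.2 (Or.inr h')
      have := (hτ_in j hjT).2
      simp only [mem_singleton] at this
      exact this (by simpa [Equiv.Perm.one_apply] using h)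
    · intro hj
      obtain ⟨hjx, hjF⟩ := mem_erase.1 hj
      refine hτ_out j ?_
      intro hjT
      rcases mem_insert.1 hjT with h | h
      · exact hjx h
      · exact (hMF j).1 h hjF
  have hrM_fix : ∀ j ∈ F, rM j ∈ F ∧ rM j ≠ j := by
    intro j hj
    obtain ⟨h1', h2'⟩ := hrM_in j hj
    exact ⟨h1', by simpa using h2'⟩
  have hrM_id : ∀ j ∈ M, rM j = j := fun j hj => hrM_out j ((hMF j).1 hj)
  have hrx_av : ∀ j, j ≠ x → rx j ≠ τ j ∧ rx j ≠ rM j ∧ rx j ≠ σ j ∧ rx j ≠ x := by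
    intro j hj
    obtain ⟨h1', h2'⟩ := hrx_in j (mem_erase.2 ⟨hj, mem_univ j⟩)
    simp only [mem_insert, mem_singleton, not_or] at h2'
    exact ⟨h2'.1, h2'.2.1, h2'.2.2, (mem_erase.1 h1').1⟩
  have hτM : ∀ j ∈ M, τ j ≠ j := by
    intro j hj h
    exact (hMF j).1 hj (mem_erase.1 ((hτ_fix j).1 h)).2
  have hπM : ∀ j ∈ M, π j ≠ j := fun j hj h => (hMF j).1 hj ((hF j).2 h)
  have d_τ_rM : ∀ j, τ j ≠ rM j := by
    intro j
    by_cases hjx : j = x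
    · subst hjx
      intro h
      exact (hMF (rM j)).1 (h ▸ hτx) (hrM_fix j hx).1
    · by_cases hjF : j ∈ F
      · rw [(hτ_fix j).2 (mem_erase.2 ⟨hjx, hjF⟩)]
        exact fun h => (hrM_fix j hjF).2 h.symm
      · rw [hrM_id j ((hMF j).2 hjF)]
        exact hτM j ((hMF j).2 hjF)
  have d_τ_rx : ∀ j, τ j ≠ rx j := by
    intro j
    by_cases hjx : j = x
    · subst hjx; rw [hrxx]; exact fun h => hMx (h ▸ hτx)
    · exact fun h => (hrx_av j hjx).1 h.symm
  have d_rM_rx : ∀ j, rM j ≠ rx j := by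
    intro j
    by_cases hjx : j = x
    · subst hjx; rw [hrxx]; exact (hrM_fix j hx).2
    · exact fun h => (hrx_av j hjx).2.1 h.symm
  have d_rM_π : ∀ j, rM j ≠ π j := by
    intro j
    by_cases hjF : j ∈ F
    · rw [(hF j).1 hjF]; exact (hrM_fix j hjF).2
    · rw [hrM_id j ((hMF j).2 hjF)]
      exact fun h => hπM j ((hMF j).2 hjF) h.symm
  have d_rx_σ : ∀ j, rx j ≠ σ j := by
    intro j
    by_cases hjx : j = x
    · subst hjx; rw [hrxx]; exact fun h => hσx h.symm
    · exact (hrx_av j hjx).2.2.1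
  have hτrM : τ ≠ rM := fun h => d_τ_rM x (by rw [h])
  have hτrx : τ ≠ rx := fun h => d_τ_rx x (by rw [h])
  have hrMrx : rM ≠ rx := fun h => d_rM_rx x (by rw [h])
  set R : Finset (Perm (Fin n)) := {τ, rM, rx} with hR
  have hRd : ∀ ρ ∈ R, ∀ ρ' ∈ R, ρ ≠ ρ' → ∀ y, ρ y ≠ ρ' y := by
    intro ρ hρ ρ' hρ' hne y
    simp only [hR, mem_insert, mem_singleton] at hρ hρ'
    rcases hρ with rfl | rfl | rfl <;> rcases hρ' with rfl | rfl | rfl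
    · exact absurd rfl hne
    · exact d_τ_rM y
    · exact d_τ_rx y
    · exact fun h => d_τ_rM y h.symm
    · exact absurd rfl hne
    · exact d_rM_rx y
    · exact fun h => d_τ_rx y h.symm
    · exact fun h => d_rM_rx y h.symm
    · exact absurd rfl hne
  have hRcard : R.card = 3 := by
    rw [hR, card_insert_of_notMem (by simp [hτrM, hτrx]),
      card_insert_of_notMem (by simp [hrMrx]), card_singleton]
  obtain ⟨K, hKsub, hKcard, hKd⟩ := extend_clique (by omega) R hRd (by omega)
  obtain ⟨ρ, hρK, hρA⟩ := clique_meets (by omega) A hA hcard K hKcard hKd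
  have notdisj : ∀ p ∈ A, ∀ q ∈ A, ¬(∀ i, p i ≠ q i) := by
    intro p hp q hq hd
    obtain ⟨i, hi⟩ := hA p hp q hq
    exact hd i hi
  have hτR : τ ∈ R := by simp [hR]
  have hrMR : rM ∈ R := by simp [hR]
  have hrxR : rx ∈ R := by simp [hR]
  by_cases hρτ : ρ = τ
  · exact ⟨τ, hρτ ▸ hρA, hτ_fix⟩
  exfalso
  by_cases hρrM : ρ = rM
  · exact notdisj rM (hρrM ▸ hρA) π hπA d_rM_π
  by_cases hρrx : ρ = rx
  · exact notdisj rx (hρrx ▸ hρA) σ hσA d_rx_σ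
  refine notdisj ρ hρA 1 h1 fun i hi => ?_
  simp only [Perm.one_apply] at hi
  by_cases hix : i = x
  · subst hix
    exact hKd ρ hρK rx (hKsub hrxR) hρrx i (by rw [hi, hrxx])
  by_cases hiF : i ∈ F
  · exact hKd ρ hρK τ (hKsub hτR) hρτ i
      (by rw [hi, (hτ_fix i).2 (mem_erase.2 ⟨hix, hiF⟩)])
  · exact hKd ρ hρK rM (hKsub hrMR) hρrM i
      (by rw [hi, hrM_id i ((hMF i).2 hiF)])

/-- Claim D : a member with a unique fixed point forces the whole family to fix
that point. -/
lemma claimD (π : Perm (Fin n)) (hπA : π ∈ A) (y : Fin n)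
    (hFix : ∀ j, π j = j ↔ j = y) (σ : Perm (Fin n)) (hσA : σ ∈ A)
    (hσy : σ y ≠ y) : False := by
  classical
  have hπy : π y = y := (hFix y).2 rfl
  set M : Finset (Fin n) := univ.erase y with hM
  have hMcard : M.card = n - 1 := by
    rw [hM, card_erase_of_mem (mem_univ y), card_univ, Fintype.card_fin]
  obtain ⟨M₁, hM₁sub, hM₁card⟩ := Finset.exists_subset_card_eq (s := M) (n := 3) (by omega)
  set M₂ : Finset (Fin n) := M \ M₁ with hM₂
  have hM₂card : M₂.card = n - 4 := by
    rw [hM₂, card_sdiff_of_subset hM₁sub, hMcard, hM₁card]; omega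
  have hyM : y ∉ M := by simp [hM]
  have hyM₁ : y ∉ M₁ := fun h => hyM (hM₁sub h)
  have hyM₂ : y ∉ M₂ := fun h => hyM (mem_sdiff.1 h).1
  have hsplit : ∀ j : Fin n, j = y ∨ j ∈ M₁ ∨ j ∈ M₂ := by
    intro j
    by_cases hjy : j = y
    · exact Or.inl hjy
    · by_cases hjM₁ : j ∈ M₁
      · exact Or.inr (Or.inl hjM₁)
      · exact Or.inr (Or.inr (mem_sdiff.2 ⟨mem_erase.2 ⟨hjy, mem_univ j⟩, hjM₁⟩))
  have hM₁M₂ : ∀ j, j ∈ M₁ → j ∉ M₂ := fun j h h2 => (mem_sdiff.1 h2).2 h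
  have hπfix : ∀ j, j ≠ y → π j ≠ j := fun j hj h => hj ((hFix j).1 h)
  -- row r1 : identity on M₁, deranges insert y M₂ avoiding π
  obtain ⟨r1, hr1_out, hr1_in⟩ := exists_perm_on_avoiding (insert y M₂)
    (fun j => {(1 : Perm (Fin n)) j, π j}) 2 2
    (fun j _ => le_trans (card_insert_le _ _) (by simp))
    (fun v => card_filter_eval_le2 _ _ _ v)
    (by rw [card_insert_of_notMem hyM₂, hM₂card]; omega)
  have hr1_id : ∀ j ∈ M₁, r1 j = j := by
    intro j hj
    refine hr1_out j fun hjT => ?_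
    rcases mem_insert.1 hjT with h | h
    · exact hyM₁ (h ▸ hj)
    · exact hM₁M₂ j hj h
  have hr1_av : ∀ j, j ∈ insert y M₂ → r1 j ∈ insert y M₂ ∧ r1 j ≠ j ∧ r1 j ≠ π j := by
    intro j hj
    obtain ⟨h1', h2'⟩ := hr1_in j hj
    simp only [mem_insert, mem_singleton, not_or, Perm.one_apply] at h2'
    exact ⟨h1', h2'.1, h2'.2⟩
  have hr1y : r1 y ≠ y := (hr1_av y (mem_insert_self y M₂)).2.1
  -- row r2 : identity on M₂, deranges insert y M₁ avoiding π and r1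
  obtain ⟨r2, hr2_out, hr2_in⟩ := exists_perm_on_avoiding (insert y M₁)
    (fun j => {π j, r1 j}) 2 2
    (fun j _ => le_trans (card_insert_le _ _) (by simp))
    (fun v => card_filter_eval_le2 _ _ _ v)
    (by rw [card_insert_of_notMem hyM₁, hM₁card]; try omega)
  have hr2_id : ∀ j ∈ M₂, r2 j = j := by
    intro j hj
    refine hr2_out j fun hjT => ?_
    rcases mem_insert.1 hjT with h | h
    · exact hyM₂ (h ▸ hj)
    · exact hM₁M₂ j h hj
  have hr2_av : ∀ j, j ∈ insert y M₁ → r2 j ∈ insert y M₁ ∧ r2 j ≠ π j ∧ r2 j ≠ r1 j := by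
    intro j hj
    obtain ⟨h1', h2'⟩ := hr2_in j hj
    simp only [mem_insert, mem_singleton, not_or] at h2'
    exact ⟨h1', h2'.1, h2'.2⟩
  have hr2y : r2 y ≠ y := by
    have := (hr2_av y (mem_insert_self y M₁)).2.1
    rw [hπy] at this; exact this
  -- row τ : fixes y, avoids r1, r2, σ elsewhere
  obtain ⟨τ, hτ_out, hτ_in⟩ := exists_perm_on_avoiding (univ.erase y)
    (fun j => {r1 j, r2 j, σ j}) 3 3
    (fun j _ => le_trans (card_insert_le _ _)
      (Nat.succ_le_succ (le_trans (card_insert_le _ _) (by simp))))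
    (fun v => card_filter_eval_le3 _ _ _ _ v)
    (by rw [card_erase_of_mem (mem_univ y), card_univ, Fintype.card_fin]; omega)
  have hτy : τ y = y := hτ_out y (by simp)
  have hτ_av : ∀ j, j ≠ y → τ j ≠ y ∧ τ j ≠ r1 j ∧ τ j ≠ r2 j ∧ τ j ≠ σ j := by
    intro j hj
    obtain ⟨h1', h2'⟩ := hτ_in j (mem_erase.2 ⟨hj, mem_univ j⟩)
    simp only [mem_insert, mem_singleton, not_or] at h2'
    exact ⟨(mem_erase.1 h1').1, h2'.1, h2'.2.1, h2'.2.2⟩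
  -- disjointness
  have d_r1_π : ∀ j, r1 j ≠ π j := by
    intro j
    rcases hsplit j with rfl | h | h
    · exact (hr1_av j (mem_insert_self _ _)).2.2
    · rw [hr1_id j h]
      exact fun hh => hπfix j (fun hy => hyM₁ (hy ▸ h)) hh.symm
    · exact (hr1_av j (mem_insert_of_mem h)).2.2
  have d_r2_π : ∀ j, r2 j ≠ π j := by
    intro j
    rcases hsplit j with rfl | h | h
    · exact (hr2_av j (mem_insert_self _ _)).2.1
    · exact (hr2_av j (mem_insert_of_mem h)).2.1
    · rw [hr2_id j h]
      exact fun hh => hπfix j (fun hy => hyM₂ (hy ▸ h)) hh.symm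
  have d_r1_r2 : ∀ j, r1 j ≠ r2 j := by
    intro j
    rcases hsplit j with rfl | h | h
    · exact fun hh => (hr2_av j (mem_insert_self _ _)).2.2 hh.symm
    · exact fun hh => (hr2_av j (mem_insert_of_mem h)).2.2 hh.symm
    · rw [hr2_id j h]
      exact (hr1_av j (mem_insert_of_mem h)).2.1
  have d_τ_r1 : ∀ j, τ j ≠ r1 j := by
    intro j
    by_cases hjy : j = y
    · subst hjy; rw [hτy]; exact fun hh => hr1y hh.symm
    · exact (hτ_av j hjy).2.1
  have d_τ_r2 : ∀ j, τ j ≠ r2 j := by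
    intro j
    by_cases hjy : j = y
    · subst hjy; rw [hτy]; exact fun hh => hr2y hh.symm
    · exact (hτ_av j hjy).2.2.1
  have d_τ_σ : ∀ j, τ j ≠ σ j := by
    intro j
    by_cases hjy : j = y
    · subst hjy; rw [hτy]; exact fun hh => hσy hh.symm
    · exact (hτ_av j hjy).2.2.2
  have hτr1 : τ ≠ r1 := fun h => d_τ_r1 y (by rw [h])
  have hτr2 : τ ≠ r2 := fun h => d_τ_r2 y (by rw [h])
  have hr1r2 : r1 ≠ r2 := fun h => d_r1_r2 y (by rw [h])
  set R : Finset (Perm (Fin n)) := {τ, r1, r2} with hR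
  have hRd : ∀ ρ ∈ R, ∀ ρ' ∈ R, ρ ≠ ρ' → ∀ z, ρ z ≠ ρ' z := by
    intro ρ hρ ρ' hρ' hne z
    simp only [hR, mem_insert, mem_singleton] at hρ hρ'
    rcases hρ with rfl | rfl | rfl <;> rcases hρ' with rfl | rfl | rfl
    · exact absurd rfl hne
    · exact d_τ_r1 z
    · exact d_τ_r2 z
    · exact fun h => d_τ_r1 z h.symm
    · exact absurd rfl hne
    · exact d_r1_r2 z
    · exact fun h => d_τ_r2 z h.symm
    · exact fun h => d_r1_r2 z h.symm
    · exact absurd rfl hne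
  have hRcard : R.card = 3 := by
    rw [hR, card_insert_of_notMem (by simp [hτr1, hτr2]),
      card_insert_of_notMem (by simp [hr1r2]), card_singleton]
  obtain ⟨K, hKsub, hKcard, hKd⟩ := extend_clique (by omega) R hRd (by omega)
  obtain ⟨ρ, hρK, hρA⟩ := clique_meets (by omega) A hA hcard K hKcard hKd
  have notdisj : ∀ p ∈ A, ∀ q ∈ A, ¬(∀ i, p i ≠ q i) := by
    intro p hp q hq hd
    obtain ⟨i, hi⟩ := hA p hp q hq
    exact hd i hi
  have hτR : τ ∈ R := by simp [hR]
  have hr1R : r1 ∈ R := by simp [hR]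
  have hr2R : r2 ∈ R := by simp [hR]
  by_cases hρτ : ρ = τ
  · exact notdisj τ (hρτ ▸ hρA) σ hσA d_τ_σ
  by_cases hρr1 : ρ = r1
  · exact notdisj r1 (hρr1 ▸ hρA) π hπA d_r1_π
  by_cases hρr2 : ρ = r2
  · exact notdisj r2 (hρr2 ▸ hρA) π hπA d_r2_π
  refine notdisj ρ hρA 1 h1 fun i hi => ?_
  simp only [Perm.one_apply] at hi
  rcases hsplit i with rfl | h | h
  · exact hKd ρ hρK τ (hKsub hτR) hρτ i (by rw [hi, hτy])
  · exact hKd ρ hρK r1 (hKsub hr1R) hρr1 i (by rw [hi, hr1_id i h])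
  · exact hKd ρ hρK r2 (hKsub hr2R) hρr2 i (by rw [hi, hr2_id i h])

end Main

lemma exists_common_fixed (hn : 7 ≤ n) (A : Finset (Perm (Fin n)))
    (hA : ∀ π ∈ A, ∀ σ ∈ A, ∃ i, π i = σ i) (hcard : A.card = (n - 1).factorial)
    (h1 : (1 : Perm (Fin n)) ∈ A) (π : Perm (Fin n)) (hπA : π ∈ A)
    (hπ1 : π ≠ 1) : ∃ y, ∀ ρ ∈ A, ρ y = y := by
  classical
  have main : ∀ k, ∀ F : Finset (Fin n), F.card = k → F.Nonempty → F ≠ univ →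
      (∃ π ∈ A, ∀ j, j ∈ F ↔ π j = j) → ∃ y, ∀ ρ ∈ A, ρ y = y := by
    intro k
    induction k using Nat.strong_induction_on with
    | _ k ih =>
      rintro F hFk hFne hFu ⟨π', hπ'A, hF⟩
      by_cases hall : ∃ x ∈ F, ∃ σ ∈ A, σ x ≠ x
      · obtain ⟨x, hx, σ, hσA, hσx⟩ := hall
        by_cases h2 : 2 ≤ F.card
        · obtain ⟨τ, hτA, hτfix⟩ :=
            claimC hn A hA hcard h1 π' hπ'A F hF h2 hFu x hx σ hσA hσx
          have hk2 : 2 ≤ k := hFk ▸ h2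
          have hcard' : (F.erase x).card = k - 1 := by
            rw [card_erase_of_mem hx, hFk]
          refine ih (k - 1) (by omega) (F.erase x) hcard' ?_ ?_
            ⟨τ, hτA, fun j => ⟨fun hj => (hτfix j).2 hj, fun hj => (hτfix j).1 hj⟩⟩
          · rw [← card_pos, hcard']; omega
          · intro hEq
            have h1' : (F.erase x).card = n := by rw [hEq, card_univ, Fintype.card_fin]
            have h2' : F.card ≤ n := by
              have := card_le_card (subset_univ F)
              rwa [card_univ, Fintype.card_fin] at this
            omega
        · have hFcard1 : F.card = 1 := by
            have := hFne.card_pos; omega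
          obtain ⟨z, hz⟩ := card_eq_one.1 hFcard1
          have hxz : x = z := by rw [hz] at hx; exact mem_singleton.1 hx
          exact absurd (claimD hn A hA hcard h1 π' hπ'A x
            (fun j => by
              rw [← hF j, hz, hxz, mem_singleton]) σ hσA hσx) (fun h => h)
      · push_neg at hall
        obtain ⟨x, hx⟩ := hFne
        exact ⟨x, fun ρ hρ => hall x hx ρ hρ⟩
  have hFne : (univ.filter fun j => π j = j).Nonempty := by
    obtain ⟨i, hi⟩ := hA π hπA 1 h1
    exact ⟨i, mem_filter.2 ⟨mem_univ i, by simpa using hi⟩⟩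
  have hFu : (univ.filter fun j => π j = j) ≠ univ := by
    intro h
    apply hπ1
    refine Equiv.ext fun j => ?_
    have hj : j ∈ univ.filter fun j => π j = j := by rw [h]; exact mem_univ j
    rw [Perm.one_apply]
    exact (mem_filter.1 hj).2
  exact main _ _ rfl hFne hFu ⟨π, hπA, fun j => by simp⟩

/-- Let `n > 6` and let `S` be an intersecting family of permutations of `{1,…,n}`
with `|S| = (n-1)!`. Then the characteristic vector of `S` lies in the real span of
the characteristic vectors `v_{i,j}` of the sets `S_{i,j} = {π : π i = j}`,
`i, j ∈ {1,…,n}`. -/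
theorem max_intersecting_family_char_vector_in_span (n : ℕ) (hn : 6 < n)
    (S : Finset (Equiv.Perm (Fin n)))
    (hS : ∀ π ∈ S, ∀ σ ∈ S, ∃ i : Fin n, π i = σ i)
    (hcard : S.card = (n - 1).factorial) :
    (fun π : Equiv.Perm (Fin n) => if π ∈ S then (1 : ℝ) else 0)
      ∈ Submodule.span ℝ
          (Set.range (fun p : Fin n × Fin n => fun π : Equiv.Perm (Fin n) =>
            if π p.1 = p.2 then (1 : ℝ) else 0)) := by
  classical
  have hn7 : 7 ≤ n := hn
  have hSne : S.Nonempty := by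
    rw [← card_pos, hcard]; exact Nat.factorial_pos _
  obtain ⟨σ₀, hσ₀⟩ := hSne
  set A := S.image (fun π => σ₀⁻¹ * π) with hA_def
  have hmem : ∀ π, π ∈ A ↔ σ₀ * π ∈ S := by
    intro π
    rw [hA_def, mem_image]
    constructor
    · rintro ⟨p, hp, rfl⟩
      rwa [mul_inv_cancel_left]
    · intro h
      exact ⟨σ₀ * π, h, by rw [inv_mul_cancel_left]⟩
  have hAcard : A.card = (n - 1).factorial := by
    rw [hA_def, card_image_of_injective _ (mul_right_injective σ₀⁻¹), hcard]
  have hAint : ∀ π ∈ A, ∀ σ ∈ A, ∃ i, π i = σ i := by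
    intro π hπ σ hσ
    obtain ⟨i, hi⟩ := hS (σ₀ * π) ((hmem π).1 hπ) (σ₀ * σ) ((hmem σ).1 hσ)
    simp only [Perm.mul_apply] at hi
    exact ⟨i, σ₀.injective hi⟩
  have h1A : (1 : Perm (Fin n)) ∈ A := by
    rw [hmem, mul_one]; exact hσ₀
  have hA2 : 2 ≤ A.card := by
    rw [hAcard]
    calc 2 ≤ n - 1 := by omega
      _ ≤ (n - 1).factorial := Nat.self_le_factorial _
  obtain ⟨π, hπA, hπ1⟩ : ∃ π ∈ A, π ≠ 1 := by
    by_contra h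
    push_neg at h
    have : A ⊆ {1} := fun ρ hρ => mem_singleton.2 (h ρ hρ)
    have := card_le_card this
    rw [card_singleton] at this
    omega
  obtain ⟨y, hy⟩ := exists_common_fixed hn7 A hAint hAcard h1A π hπA hπ1
  set Sy := univ.filter fun ρ : Perm (Fin n) => ρ y = y with hSy_def
  have hAsub : A ⊆ Sy := fun ρ hρ => mem_filter.2 ⟨mem_univ _, hy ρ hρ⟩
  haveI : NeZero n := ⟨by omega⟩
  have hSycard : Sy.card ≤ (n - 1).factorial := by
    have hinj : Set.InjOn (fun q : Fin n × Perm (Fin n) => (Equiv.addLeft q.1) * q.2)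
        ((univ ×ˢ Sy) : Finset (Fin n × Perm (Fin n))) := by
      rintro ⟨k, ρ⟩ hkρ ⟨l, ρ'⟩ hlρ' h
      simp only [coe_product, Set.mem_prod, mem_coe, mem_filter] at hkρ hlρ'
      have hy1 : ρ y = y := (mem_filter.1 hkρ.2).2
      have hy2 : ρ' y = y := (mem_filter.1 hlρ'.2).2
      have happ : ∀ x, k + ρ x = l + ρ' x := by
        intro x
        have := congrArg (fun (e : Perm (Fin n)) => e x) h
        simpa [Perm.mul_apply] using this
      have hkl : k = l := by
        have := happ y
        rw [hy1, hy2] at this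
        exact add_right_cancel this
      subst hkl
      have : ρ = ρ' := Equiv.ext fun x => add_left_cancel (happ x)
      rw [this]
    have hmaps : ∀ q ∈ (univ ×ˢ Sy : Finset (Fin n × Perm (Fin n))),
        (Equiv.addLeft q.1) * q.2 ∈ (univ : Finset (Perm (Fin n))) :=
      fun q _ => mem_univ _
    have hle := Finset.card_le_card_of_injOn _ hmaps hinj
    rw [card_product, card_univ, card_univ, Fintype.card_fin, Fintype.card_perm,
      Fintype.card_fin] at hle
    have hfac : n * (n - 1).factorial = n.factorial := Nat.mul_factorial_pred (by omega)
    have := hle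
    rw [← hfac] at this
    exact Nat.le_of_mul_le_mul_left this (by omega)
  have hAeq : A = Sy := Finset.eq_of_subset_of_card_le hAsub (by rw [hAcard]; exact hSycard)
  have hiff : ∀ π : Perm (Fin n), π ∈ S ↔ π y = σ₀ y := by
    intro ρ
    have h1' := hmem (σ₀⁻¹ * ρ)
    rw [mul_inv_cancel_left] at h1'
    rw [← h1', hAeq, hSy_def, mem_filter]
    simp only [mem_univ, true_and, Perm.mul_apply]
    constructor
    · intro h
      have : ρ y = σ₀ (σ₀⁻¹ (ρ y)) := by simp
      rw [this, show σ₀⁻¹ (ρ y) = y from h]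
    · intro h
      show σ₀⁻¹ (ρ y) = y
      rw [h]; simp
  have hfun : (fun π : Perm (Fin n) => if π ∈ S then (1 : ℝ) else 0)
      = (fun p : Fin n × Fin n => fun π : Perm (Fin n) =>
          if π p.1 = p.2 then (1 : ℝ) else 0) (y, σ₀ y) := by
    funext ρ
    have hb : ((fun p : Fin n × Fin n => fun π : Perm (Fin n) =>
        if π p.1 = p.2 then (1 : ℝ) else 0) (y, σ₀ y)) ρ
        = if ρ y = σ₀ y then (1 : ℝ) else 0 := rfl
    rw [hb]
    by_cases h : ρ ∈ S
    · rw [if_pos h, if_pos ((hiff ρ).1 h)]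
    · rw [if_neg h, if_neg fun hc => h ((hiff ρ).2 hc)]
  rw [hfun]
  exact Submodule.subset_span (Set.mem_range.2 ⟨(y, σ₀ y), rfl⟩)
end Build
end

section
/- Let n ≥ 4 and let x assign a real number x(i) to each i ∈ {1,…,n−1}. Suppose that for every permutation π of {1,…,n} the sum Σ x(i), taken over all i ∈ {1,…,n−1} with π(i) = i, lies in {0,1}. Then every x(i) lies in {0,1} and at most one i ∈ {1,…,n−1} has x(i) = 1 (i.e. x is either identically zero or a standard basis vector). -/
/-- Let `n ≥ 4` and let `x` assign a real number to each `i ∈ {1,…,n-1}`. If for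
every permutation `π` of `{1,…,n}` the sum `Σ_{i ≤ n-1, π i = i} x i` lies in
`{0,1}`, then every `x i` lies in `{0,1}` and at most one `i` has `x i = 1`. -/
theorem zero_one_sums_over_fixed_points (n : ℕ) (hn : 4 ≤ n)
    (x : Fin (n - 1) → ℝ)
    (hx : ∀ π : Equiv.Perm (Fin n),
      (∑ i : Fin (n - 1),
        if π (Fin.castLE (n.sub_le 1) i) = Fin.castLE (n.sub_le 1) i
          then x i else 0) ∈ ({0, 1} : Set ℝ)) :
    (∀ i, x i = 0 ∨ x i = 1) ∧
    (∀ i j : Fin (n - 1), x i = 1 → x j = 1 → i = j) := by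
  have key : ∀ S : Finset (Fin (n - 1)), (∑ i ∈ S, x i) ∈ ({0, 1} : Set ℝ) := by
    intro S
    by_cases hS : S = Finset.univ
    · subst hS
      have := hx 1
      simpa using this
    · -- complement is nonempty
      obtain ⟨j, hj⟩ : ∃ j, j ∉ S := by
        by_contra h
        push_neg at h
        exact hS (Finset.eq_univ_iff_forall.mpr h)
      set m : Fin n := ⟨n - 1, by omega⟩ with hm
      set l : List (Fin n) :=
        m :: (Sᶜ.toList.map (Fin.castLE (n.sub_le 1))) with hl
      have hnodup : l.Nodup := by
        refine List.nodup_cons.mpr ⟨?_, ?_⟩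
        · intro hmem
          obtain ⟨a, _, ha⟩ := List.mem_map.mp hmem
          have : (a : ℕ) = n - 1 := congrArg Fin.val ha
          omega
        · exact (Finset.nodup_toList _).map (Fin.castLE_injective _)
      have hlen : 2 ≤ l.length := by
        have : j ∈ Sᶜ.toList := Finset.mem_toList.mpr (Finset.mem_compl.mpr hj)
        have h1 := List.length_pos_of_mem this
        simp only [hl, List.length_cons, List.length_map]
        omega
      have := hx l.formPerm
      have heq : (∑ i : Fin (n - 1),
          if l.formPerm (Fin.castLE (n.sub_le 1) i) = Fin.castLE (n.sub_le 1) i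
            then x i else 0) = ∑ i ∈ S, x i := by
        rw [← Finset.univ_inter S, ← Finset.sum_ite_mem]
        apply Finset.sum_congr rfl
        intro i _
        by_cases hi : i ∈ S
        · have hnot : Fin.castLE (n.sub_le 1) i ∉ l := by
            simp only [hl, List.mem_cons, List.mem_map, not_or]
            constructor
            · intro h
              have : (i : ℕ) = n - 1 := congrArg Fin.val h
              have := i.isLt
              omega
            · rintro ⟨a, ha, hae⟩
              have : a = i := Fin.castLE_injective _ hae
              subst this
              exact (Finset.mem_compl.mp (Finset.mem_toList.mp ha)) hi
          rw [List.formPerm_apply_of_notMem hnot, if_pos rfl, if_pos hi]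
        · have hmem : Fin.castLE (n.sub_le 1) i ∈ l := by
            simp only [hl, List.mem_cons, List.mem_map]
            exact Or.inr ⟨i, Finset.mem_toList.mpr (Finset.mem_compl.mpr hi), rfl⟩
          have := (List.formPerm_apply_mem_ne_self_iff _ hnodup _ hmem).mpr hlen
          rw [if_neg this, if_neg hi]
      rw [heq] at this
      exact this
  constructor
  · intro i
    have := key {i}
    simpa using this
  · intro i j hi hj
    by_contra hij
    have := key {i, j}
    rw [Finset.sum_pair hij, hi, hj] at this
    simp at this
end
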